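/- arXiv:2108.03197 — 4 statements merged into one kernel-verified Lean document; each statement's English description precedes it below -/
import Mathlib

section
/- Fiberwise form of Prop. 5.2 (smooth extension of the components of a proper solution): Let n ≥ 2, let C ⊆ ℝ^n ∖ {0} be open and conic with closure C̄ in ℝ^n ∖ {0}, and let U be an open conic neighborhood of C̄ in ℝ^n ∖ {0}. Let J = (J_i^k) : U → ℝ^{n×n} be smooth and positively 1-homogeneous, and assume that on C one has J_i^k = Z^k_{·i} + A_i y^k for some smooth positively 2-homogeneous Z : C → ℝ^n and some smooth positively 0-homogeneous A = (A_1,…,A_n) : C → ℝ^n. Then Z and A extend smoothly to C̄: there exist a smooth positively 2-homogeneous map Ẑ and a smooth positively 0-homogeneous map Â, both defined on an open conic neighborhood of C̄ in ℝ^n ∖ {0}, with Ẑ = Z and Â = A on C. -/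
open scoped BigOperators

noncomputable section

/-- Partial derivative `∂f/∂y^i`. -/
def pd {n : ℕ} (f : (Fin n → ℝ) → ℝ) (i : Fin n) : (Fin n → ℝ) → ℝ :=
  fun y => fderiv ℝ f y (Pi.single i 1)

/-- `C` is a conic set: stable under positive scalings. -/
def Conic {n : ℕ} (C : Set (Fin n → ℝ)) : Prop :=
  ∀ ⦃y⦄, y ∈ C → ∀ ⦃t : ℝ⦄, 0 < t → t • y ∈ C

/-- `f` is positively `α`-homogeneous on `C`. -/
def PosHom {n : ℕ} (α : ℝ) (C : Set (Fin n → ℝ)) (f : (Fin n → ℝ) → ℝ) : Prop :=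
  ∀ y ∈ C, ∀ t : ℝ, 0 < t → f (t • y) = t ^ α * f y

/-- Vector-valued positively `α`-homogeneous map on `C`. -/
def PosHomMap {n : ℕ} (α : ℝ) (C : Set (Fin n → ℝ)) (Z : (Fin n → ℝ) → Fin n → ℝ) : Prop :=
  ∀ y ∈ C, ∀ t : ℝ, 0 < t → Z (t • y) = t ^ α • Z y


/-- Closure of `C` inside `ℝ^n ∖ {0}`. -/
def clos {n : ℕ} (C : Set (Fin n → ℝ)) : Set (Fin n → ℝ) := closure C \ {0}

/- ---------- auxiliary lemmas ---------- -/

lemma pd_contDiffOn {n : ℕ} {f : (Fin n → ℝ) → ℝ} {U : Set (Fin n → ℝ)}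
    (hU : IsOpen U) (hf : ContDiffOn ℝ (⊤ : ℕ∞) f U) (i : Fin n) :
    ContDiffOn ℝ (⊤ : ℕ∞) (pd f i) U := by
  have h := hf.fderiv_of_isOpen hU (m := ((⊤ : ℕ∞) : WithTop ℕ∞)) (by simp)
  exact h.clm_apply contDiffOn_const

lemma pd_diffAt {n : ℕ} {f : (Fin n → ℝ) → ℝ} {U : Set (Fin n → ℝ)}
    (hU : IsOpen U) (hf : ContDiffOn ℝ (⊤ : ℕ∞) f U) (i : Fin n)
    {y : Fin n → ℝ} (hy : y ∈ U) : DifferentiableAt ℝ (pd f i) y :=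
  ((pd_contDiffOn hU hf i).differentiableOn (by simp)).differentiableAt (hU.mem_nhds hy)

lemma diffAt_of_contDiffOn {n : ℕ} {f : (Fin n → ℝ) → ℝ} {U : Set (Fin n → ℝ)}
    (hU : IsOpen U) (hf : ContDiffOn ℝ (⊤ : ℕ∞) f U)
    {y : Fin n → ℝ} (hy : y ∈ U) : DifferentiableAt ℝ f y :=
  (hf.differentiableOn (by simp)).differentiableAt (hU.mem_nhds hy)

lemma vec_eq_sum {n : ℕ} (y : Fin n → ℝ) : y = ∑ i, y i • (Pi.single i 1 : Fin n → ℝ) := by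
  have h : ∀ i, y i • (Pi.single i 1 : Fin n → ℝ) = Pi.single i (y i) := by
    intro i; rw [← Pi.single_smul]; simp
  simp_rw [h, Finset.univ_sum_single]

lemma euler {n : ℕ} {f : (Fin n → ℝ) → ℝ} {α : ℝ} {y : Fin n → ℝ}
    (hhom : ∀ t : ℝ, 0 < t → f (t • y) = t ^ α * f y)
    (hdiff : DifferentiableAt ℝ f y) :
    ∑ i, y i * pd f i y = α * f y := by
  have h1 : HasDerivAt (fun t : ℝ => f (t • y)) (fderiv ℝ f y y) 1 := by
    have hc : HasDerivAt (fun t : ℝ => t • y) y 1 := by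
      simpa using (hasDerivAt_id (1:ℝ)).smul_const y
    have := hdiff.hasFDerivAt
    rw [show y = (1:ℝ) • y by simp] at this
    have h2 := this.comp_hasDerivAt 1 hc
    simp only [one_smul] at h2
    exact h2
  have h2 : HasDerivAt (fun t : ℝ => t ^ α * f y) (α * f y) 1 := by
    have := (Real.hasDerivAt_rpow_const (x := (1:ℝ)) (p := α) (Or.inl one_ne_zero)).mul_const (f y)
    simpa using this
  have heq : (fun t : ℝ => f (t • y)) =ᶠ[nhds (1:ℝ)] (fun t : ℝ => t ^ α * f y) := by
    filter_upwards [eventually_gt_nhds (by norm_num : (0:ℝ) < 1)] with t ht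
    exact hhom t ht
  have h3 : HasDerivAt (fun t : ℝ => f (t • y)) (α * f y) 1 := h2.congr_of_eventuallyEq heq
  have h4 : fderiv ℝ f y y = α * f y := h1.unique h3
  calc ∑ i, y i * pd f i y = fderiv ℝ f y (∑ i, y i • (Pi.single i 1 : Fin n → ℝ)) := by
        rw [map_sum]; congr 1; ext i; rw [map_smul]; rfl
    _ = α * f y := by rw [← vec_eq_sum]; exact h4

lemma pd_hom {n : ℕ} {U : Set (Fin n → ℝ)} (hU : IsOpen U) (hUc : Conic U)
    {f : (Fin n → ℝ) → ℝ} {α : ℝ} (hf : DifferentiableOn ℝ f U)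
    (hhom : ∀ z ∈ U, ∀ t : ℝ, 0 < t → f (t • z) = t ^ α * f z)
    (i : Fin n) : ∀ y ∈ U, ∀ t : ℝ, 0 < t → pd f i (t • y) = t ^ (α - 1) * pd f i y := by
  intro y hy t ht
  have hty : t • y ∈ U := hUc hy ht
  have hdty : DifferentiableAt ℝ f (t • y) := (hf.differentiableAt (hU.mem_nhds hty))
  have hdy : DifferentiableAt ℝ f y := (hf.differentiableAt (hU.mem_nhds hy))
  have hsm : HasFDerivAt (fun z : Fin n → ℝ => t • z) (t • ContinuousLinearMap.id ℝ (Fin n → ℝ)) y :=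
    (hasFDerivAt_id y).const_smul t
  have h1 : HasFDerivAt (fun z => f (t • z))
      ((fderiv ℝ f (t • y)).comp (t • ContinuousLinearMap.id ℝ (Fin n → ℝ))) y :=
    hdty.hasFDerivAt.comp y hsm
  have heq : (fun z => f (t • z)) =ᶠ[nhds y] (fun z => t ^ α * f z) := by
    filter_upwards [hU.mem_nhds hy] with z hz
    exact hhom z hz t ht
  have h2 : HasFDerivAt (fun z => t ^ α * f z) ((fderiv ℝ f (t • y)).comp
      (t • ContinuousLinearMap.id ℝ (Fin n → ℝ))) y := h1.congr_of_eventuallyEq heq.symm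
  have h3 : HasFDerivAt (fun z => t ^ α * f z) ((t ^ α : ℝ) • fderiv ℝ f y) y :=
    hdy.hasFDerivAt.const_mul _
  have h4 := h2.unique h3
  have h5 : t * pd f i (t • y) = t ^ α * pd f i y := by
    have := congrArg (fun L : (Fin n → ℝ) →L[ℝ] ℝ => L (Pi.single i 1)) h4
    simpa [pd, mul_comm] using this
  have h6 : pd f i (t • y) = t ^ α / t * pd f i y := by
    field_simp at h5 ⊢; linarith [h5]
  rw [h6]
  rw [show t ^ (α - 1) = t ^ α / t by rw [Real.rpow_sub ht, Real.rpow_one]]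

lemma pd_comm {n : ℕ} {U : Set (Fin n → ℝ)} (hU : IsOpen U)
    {f : (Fin n → ℝ) → ℝ} (hf : ContDiffOn ℝ (⊤ : ℕ∞) f U)
    {y : Fin n → ℝ} (hy : y ∈ U) (i k : Fin n) :
    pd (pd f i) k y = pd (pd f k) i y := by
  have hdf : DifferentiableOn ℝ f U := hf.differentiableOn (by simp)
  have hf' : ContDiffOn ℝ (⊤ : ℕ∞) (fderiv ℝ f) U :=
    hf.fderiv_of_isOpen hU (m := ((⊤ : ℕ∞) : WithTop ℕ∞)) (by simp)
  have hdf' : DifferentiableAt ℝ (fderiv ℝ f) y :=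
    (hf'.differentiableOn (by simp)).differentiableAt (hU.mem_nhds hy)
  have hev : ∀ᶠ z in nhds y, HasFDerivAt f (fderiv ℝ f z) z := by
    filter_upwards [hU.mem_nhds hy] with z hz
    exact (hdf.differentiableAt (hU.mem_nhds hz)).hasFDerivAt
  have hsymm := second_derivative_symmetric_of_eventually hev hdf'.hasFDerivAt
    (Pi.single i 1) (Pi.single k 1)
  have key : ∀ j l : Fin n, pd (pd f j) l y =
      fderiv ℝ (fderiv ℝ f) y (Pi.single l 1) (Pi.single j 1) := by
    intro j l
    rw [show pd (pd f j) l y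
        = fderiv ℝ (fun z => (fderiv ℝ f z) (Pi.single j 1)) y (Pi.single l 1) from rfl]
    rw [fderiv_clm_apply hdf' (differentiableAt_const _)]
    simp
  rw [key i k, key k i, hsymm]

/-- coordinate functions are smooth -/
lemma coord_contDiff {n : ℕ} (k : Fin n) : ContDiff ℝ (⊤ : ℕ∞) (fun z : Fin n → ℝ => z k) :=
  (ContinuousLinearMap.proj k : (Fin n → ℝ) →L[ℝ] ℝ).contDiff

lemma coord_fderiv {n : ℕ} (k : Fin n) (y : Fin n → ℝ) :
    fderiv ℝ (fun z : Fin n → ℝ => z k) y = (ContinuousLinearMap.proj k : (Fin n → ℝ) →L[ℝ] ℝ) :=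
  (ContinuousLinearMap.proj k : (Fin n → ℝ) →L[ℝ] ℝ).fderiv

lemma den_pos {n : ℕ} {y : Fin n → ℝ} (hy : y ≠ 0) : 0 < ∑ k, y k * y k := by
  obtain ⟨k, hk⟩ := Function.ne_iff.mp hy
  exact Finset.sum_pos' (fun j _ => mul_self_nonneg _)
    ⟨k, Finset.mem_univ k, mul_self_pos.mpr (by simpa using hk)⟩
/-- **Fiberwise form of Prop. 5.2** (smooth extension of the components of a proper
solution). If `J`, smooth and 1-homogeneous on an open conic neighborhood `U` of the
closure of `C` in `ℝ^n ∖ {0}`, decomposes on `C` as `J_i^k = Z^k_{·i} + A_i y^k` with `Z`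
smooth 2-homogeneous and `A` smooth 0-homogeneous on `C`, then `Z` and `A` extend smoothly
(and homogeneously) to an open conic neighborhood of the closure of `C` in `ℝ^n ∖ {0}`. -/
theorem proper_solution_components_extend
    {n : ℕ} (hn : 2 ≤ n) (C : Set (Fin n → ℝ)) (hCopen : IsOpen C)
    (hCnz : ∀ y ∈ C, y ≠ 0) (hCconic : Conic C)
    (U : Set (Fin n → ℝ)) (hUopen : IsOpen U) (hUconic : Conic U)
    (hUnz : ∀ y ∈ U, y ≠ 0) (hCU : clos C ⊆ U)
    (J : (Fin n → ℝ) → Fin n → Fin n → ℝ)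
    (hJsmooth : ContDiffOn ℝ (⊤ : ℕ∞) J U)
    (hJhom : ∀ y ∈ U, ∀ t : ℝ, 0 < t → J (t • y) = t • J y)
    (Z A : (Fin n → ℝ) → Fin n → ℝ)
    (hZsmooth : ContDiffOn ℝ (⊤ : ℕ∞) Z C) (hZhom : PosHomMap 2 C Z)
    (hAsmooth : ContDiffOn ℝ (⊤ : ℕ∞) A C) (hAhom : PosHomMap 0 C A)
    (hdec : ∀ y ∈ C, ∀ i k, J y i k = pd (fun z => Z z k) i y + A y i * y k) :
    ∃ (V : Set (Fin n → ℝ)) (Zh Ah : (Fin n → ℝ) → Fin n → ℝ),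
      IsOpen V ∧ Conic V ∧ (∀ y ∈ V, y ≠ 0) ∧ clos C ⊆ V ∧
      ContDiffOn ℝ (⊤ : ℕ∞) Zh V ∧ PosHomMap 2 V Zh ∧
      ContDiffOn ℝ (⊤ : ℕ∞) Ah V ∧ PosHomMap 0 V Ah ∧
      (∀ y ∈ C, Zh y = Z y ∧ Ah y = A y) := by
  classical
  -- components of J are smooth on U
  have hJc : ∀ i k, ContDiffOn ℝ (⊤ : ℕ∞) (fun z => J z i k) U := by
    intro i k
    exact contDiffOn_pi.mp (contDiffOn_pi.mp hJsmooth i) k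
  -- components of J are 1-homogeneous on U (rpow form)
  have hJchom : ∀ i k, ∀ z ∈ U, ∀ t : ℝ, 0 < t →
      J (t • z) i k = t ^ (1:ℝ) * J z i k := by
    intro i k z hz t ht
    rw [hJhom z hz t ht, Real.rpow_one]
    rfl
  -- the auxiliary scalar function a (the contraction y·A, expressed via J only)
  set a : (Fin n → ℝ) → ℝ := fun y =>
    ((∑ i, ∑ k, y i * pd (fun z => J z i k) k y) - ∑ k, J y k k) / ((n : ℝ) - 1) with ha_def
  set Zh : (Fin n → ℝ) → Fin n → ℝ :=
    fun y k => ((∑ i, y i * J y i k) - a y * y k) / 2 with hZh_def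
  set Ah : (Fin n → ℝ) → Fin n → ℝ := fun y i =>
    ((∑ k, J y i k * y k) - ∑ k, pd (fun z => Zh z k) i y * y k) / (∑ k, y k * y k) with hAh_def
  -- pd of J components: homogeneity of degree 0 on U
  have hpdJhom : ∀ i k l, ∀ y ∈ U, ∀ t : ℝ, 0 < t →
      pd (fun z => J z i k) l (t • y) = pd (fun z => J z i k) l y := by
    intro i k l y hy t ht
    have := pd_hom hUopen hUconic ((hJc i k).differentiableOn (by simp))
      (hJchom i k) l y hy t ht
    simpa [Real.rpow_zero] using this
  -- homogeneity of a : degree 1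
  have ha_hom : ∀ y ∈ U, ∀ t : ℝ, 0 < t → a (t • y) = t * a y := by
    intro y hy t ht
    have h1 : ∀ i k, (t • y) i * pd (fun z => J z i k) k (t • y)
        = t * (y i * pd (fun z => J z i k) k y) := by
      intro i k
      rw [hpdJhom i k k y hy t ht]
      simp [Pi.smul_apply, smul_eq_mul, mul_assoc]
    have h2 : ∀ k, J (t • y) k k = t * J y k k := by
      intro k; rw [hJchom k k y hy t ht, Real.rpow_one]
    simp only [ha_def]
    simp_rw [h1, h2, ← Finset.mul_sum]
    ring
  -- smoothness of a on U
  have ha_smooth : ContDiffOn ℝ (⊤ : ℕ∞) a U := by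
    apply ContDiffOn.div_const
    apply ContDiffOn.sub
    · apply ContDiffOn.sum; intro i _
      apply ContDiffOn.sum; intro k _
      exact ((coord_contDiff i).contDiffOn).mul (pd_contDiffOn hUopen (hJc i k) k)
    · exact ContDiffOn.sum fun k _ => hJc k k
  -- smoothness of Zh components on U
  have hZhc_smooth : ∀ k, ContDiffOn ℝ (⊤ : ℕ∞) (fun y => Zh y k) U := by
    intro k
    apply ContDiffOn.div_const
    apply ContDiffOn.sub
    · exact ContDiffOn.sum fun i _ => ((coord_contDiff i).contDiffOn).mul (hJc i k)
    · exact ha_smooth.mul (coord_contDiff k).contDiffOn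
  have hZh_smooth : ContDiffOn ℝ (⊤ : ℕ∞) Zh U := contDiffOn_pi.mpr hZhc_smooth
  -- homogeneity of Zh components, scalar (rpow) form
  have hZhc_hom : ∀ k, ∀ y ∈ U, ∀ t : ℝ, 0 < t →
      Zh (t • y) k = t ^ (2:ℝ) * Zh y k := by
    intro k y hy t ht
    have h1 : ∀ i, (t • y) i * J (t • y) i k = t * t * (y i * J y i k) := by
      intro i
      rw [hJchom i k y hy t ht, Real.rpow_one]
      simp [Pi.smul_apply, smul_eq_mul]; ring
    have ht2 : t ^ (2:ℝ) = t * t := by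
      rw [show (2:ℝ) = ((2:ℕ):ℝ) by norm_num, Real.rpow_natCast]; ring
    simp only [hZh_def]
    simp_rw [h1, ha_hom y hy t ht, ← Finset.mul_sum, ht2]
    have : (t • y) k = t * y k := rfl
    rw [this]; ring
  have hZh_hom : PosHomMap 2 U Zh := by
    intro y hy t ht
    funext k
    rw [Pi.smul_apply, smul_eq_mul]
    exact hZhc_hom k y hy t ht
  -- pd of Zh components : 1-homogeneous on U
  have hpdZh_hom : ∀ k i, ∀ y ∈ U, ∀ t : ℝ, 0 < t →
      pd (fun z => Zh z k) i (t • y) = t * pd (fun z => Zh z k) i y := by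
    intro k i y hy t ht
    have := pd_hom hUopen hUconic ((hZhc_smooth k).differentiableOn (by simp))
      (fun z hz => hZhc_hom k z hz) i y hy t ht
    rw [show (2:ℝ) - 1 = 1 by norm_num, Real.rpow_one] at this
    exact this
  -- denominator positive on U
  have hden : ∀ y ∈ U, (0:ℝ) < ∑ k, y k * y k := fun y hy => den_pos (hUnz y hy)
  -- smoothness of Ah
  have hAh_smooth : ContDiffOn ℝ (⊤ : ℕ∞) Ah U := by
    apply contDiffOn_pi.mpr
    intro i
    apply ContDiffOn.div
    · apply ContDiffOn.sub
      · exact ContDiffOn.sum fun k _ => (hJc i k).mul (coord_contDiff k).contDiffOn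
      · exact ContDiffOn.sum fun k _ =>
          (pd_contDiffOn hUopen (hZhc_smooth k) i).mul (coord_contDiff k).contDiffOn
    · exact ContDiffOn.sum fun k _ =>
        ((coord_contDiff k).contDiffOn).mul (coord_contDiff k).contDiffOn
    · exact fun y hy => (hden y hy).ne'
  -- homogeneity of Ah : degree 0
  have hAh_hom : PosHomMap 0 U Ah := by
    intro y hy t ht
    funext i
    rw [Pi.smul_apply, smul_eq_mul, Real.rpow_zero, one_mul]
    simp only [hAh_def]
    have h1 : ∀ k, J (t • y) i k * (t • y) k = t * t * (J y i k * y k) := by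
      intro k
      rw [hJchom i k y hy t ht, Real.rpow_one, show (t • y) k = t * y k from rfl]; ring
    have h2 : ∀ k, pd (fun z => Zh z k) i (t • y) * (t • y) k
        = t * t * (pd (fun z => Zh z k) i y * y k) := by
      intro k
      rw [hpdZh_hom k i y hy t ht, show (t • y) k = t * y k from rfl]; ring
    have h3 : ∀ k, (t • y) k * (t • y) k = t * t * (y k * y k) := by
      intro k; rw [show (t • y) k = t * y k from rfl]; ring
    simp_rw [h1, h2, h3, ← Finset.mul_sum]
    rw [← mul_sub, mul_div_mul_left _ _ (by positivity : t * t ≠ 0)]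
  -- membership of C in U
  have hCsubU : ∀ y ∈ C, y ∈ U := fun y hy =>
    hCU ⟨subset_closure hy, hCnz y hy⟩
  -- components of Z, A smooth on C
  have hZc : ∀ k, ContDiffOn ℝ (⊤ : ℕ∞) (fun z => Z z k) C :=
    fun k => contDiffOn_pi.mp hZsmooth k
  have hAc : ∀ i, ContDiffOn ℝ (⊤ : ℕ∞) (fun z => A z i) C :=
    fun i => contDiffOn_pi.mp hAsmooth i
  -- key: a = ∑ y i * A y i on C, and Zh = Z on C
  have ha_eq : ∀ y ∈ C, a y = ∑ i, y i * A y i := by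
    intro y hy
    -- pd of J components via the decomposition
    have hJpd : ∀ i k, pd (fun z => J z i k) k y
        = pd (pd (fun z => Z z k) i) k y + (y k * pd (fun z => A z i) k y + A y i) := by
      intro i k
      have heq : (fun z => J z i k)
          =ᶠ[nhds y] (fun z => pd (fun w => Z w k) i z + A z i * z k) := by
        filter_upwards [hCopen.mem_nhds hy] with z hz
        exact hdec z hz i k
      have hd1 : DifferentiableAt ℝ (pd (fun w => Z w k) i) y :=
        pd_diffAt hCopen (hZc k) i hy
      have hd2 : DifferentiableAt ℝ (fun z => A z i) y :=
        diffAt_of_contDiffOn hCopen (hAc i) hy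
      have hd3 : DifferentiableAt ℝ (fun z : Fin n → ℝ => z k) y :=
        (coord_contDiff k).differentiable (by simp) y
      show fderiv ℝ (fun z => J z i k) y (Pi.single k 1) = _
      rw [heq.fderiv_eq, fderiv_fun_add (g := fun z => A z i * z k) hd1 (hd2.mul hd3)]
      rw [ContinuousLinearMap.add_apply]
      congr 1
      rw [fderiv_fun_mul hd2 hd3]
      rw [ContinuousLinearMap.add_apply, ContinuousLinearMap.smul_apply,
        ContinuousLinearMap.smul_apply, coord_fderiv]
      simp only [pd, smul_eq_mul, ContinuousLinearMap.proj_apply, Pi.single_eq_same, mul_one]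
      ring
    -- Euler identities
    have hEulerA : ∀ i, ∑ k, y k * pd (fun z => A z i) k y = 0 := by
      intro i
      have h := euler (f := fun z => A z i) (α := 0) (y := y) ?_ ?_
      · simpa using h
      · intro t ht
        rw [hAhom y hy t ht]
        simp [Pi.smul_apply]
      · exact diffAt_of_contDiffOn hCopen (hAc i) hy
    have hEulerZ : ∀ k, ∑ i, y i * pd (fun z => Z z k) i y = 2 * Z y k := by
      intro k
      have h := euler (f := fun z => Z z k) (α := 2) (y := y) ?_ ?_
      · exact h
      · intro t ht
        rw [hZhom y hy t ht]
        simp [Pi.smul_apply]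
      · exact diffAt_of_contDiffOn hCopen (hZc k) hy
    have hEulerdZ : ∀ k, ∑ i, y i * pd (pd (fun z => Z z k) k) i y
        = pd (fun z => Z z k) k y := by
      intro k
      have hhomZk : ∀ z ∈ C, ∀ t : ℝ, 0 < t →
          (fun w => Z w k) (t • z) = t ^ (2:ℝ) * Z z k := by
        intro z hz t ht
        rw [show (fun w => Z w k) (t • z) = Z (t • z) k from rfl, hZhom z hz t ht]
        simp [Pi.smul_apply]
      have hpdhom := pd_hom hCopen hCconic ((hZc k).differentiableOn (by simp)) hhomZk k
      have h := euler (f := pd (fun z => Z z k) k) (α := 1) (y := y) ?_ ?_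
      · rw [h, one_mul]
      · intro t ht
        have := hpdhom y hy t ht
        rw [show (2:ℝ) - 1 = 1 by norm_num] at this
        exact this
      · exact pd_diffAt hCopen (hZc k) k hy
    -- symmetry of second derivatives
    have hsym : ∀ i k, pd (pd (fun z => Z z k) i) k y = pd (pd (fun z => Z z k) k) i y :=
      fun i k => pd_comm hCopen (hZc k) hy i k
    -- the numerator computation
    have hnum : (∑ i, ∑ k, y i * pd (fun z => J z i k) k y) - ∑ k, J y k k
        = ((n:ℝ) - 1) * (∑ i, y i * A y i) := by
      have e1 : ∀ i, ∑ k, y i * pd (fun z => J z i k) k y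
          = (∑ k, y i * pd (pd (fun z => Z z k) k) i y)
            + y i * (∑ k, y k * pd (fun z => A z i) k y)
            + (n:ℝ) * (y i * A y i) := by
        intro i
        simp_rw [hJpd i, hsym i]
        rw [Finset.mul_sum]
        have hterm : ∀ k, y i * (pd (pd (fun z => Z z k) k) i y
            + (y k * pd (fun z => A z i) k y + A y i))
            = y i * pd (pd (fun z => Z z k) k) i y
              + y i * (y k * pd (fun z => A z i) k y) + y i * A y i := fun k => by ring
        simp_rw [hterm]
        rw [Finset.sum_add_distrib, Finset.sum_add_distrib, ← Finset.mul_sum,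
          Finset.sum_const, Finset.card_univ, Fintype.card_fin]
        push_cast
        ring
      have e2 : ∀ k, J y k k = pd (fun z => Z z k) k y + A y k * y k := fun k => hdec y hy k k
      calc (∑ i, ∑ k, y i * pd (fun z => J z i k) k y) - ∑ k, J y k k
          = (∑ i, ((∑ k, y i * pd (pd (fun z => Z z k) k) i y)
              + y i * (∑ k, y k * pd (fun z => A z i) k y)
              + (n:ℝ) * (y i * A y i)))
            - ∑ k, (pd (fun z => Z z k) k y + A y k * y k) := by
            simp_rw [e1, e2]
        _ = ((∑ i, ∑ k, y i * pd (pd (fun z => Z z k) k) i y)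
              + (∑ i, y i * (∑ k, y k * pd (fun z => A z i) k y))
              + (n:ℝ) * ∑ i, y i * A y i)
            - ((∑ k, pd (fun z => Z z k) k y) + ∑ k, A y k * y k) := by
            rw [Finset.sum_add_distrib, Finset.sum_add_distrib, Finset.sum_add_distrib,
              ← Finset.mul_sum]
        _ = ((n:ℝ) - 1) * (∑ i, y i * A y i) := by
            rw [Finset.sum_comm]
            simp_rw [hEulerdZ, hEulerA, mul_zero, Finset.sum_const, smul_zero]
            have hsw : ∑ k, A y k * y k = ∑ k, y k * A y k :=
              Finset.sum_congr rfl fun k _ => mul_comm _ _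
            rw [hsw]
            ring
    have hne : ((n:ℝ) - 1) ≠ 0 := by
      have : (2:ℝ) ≤ (n:ℝ) := by exact_mod_cast hn
      linarith
    simp only [ha_def]
    rw [hnum, mul_comm ((n:ℝ) - 1) _, mul_div_assoc, div_self hne, mul_one]
  -- Zh agrees with Z on C
  have hZh_eqC : ∀ y ∈ C, Zh y = Z y := by
    intro y hy
    funext k
    have hEulerZ : ∑ i, y i * pd (fun z => Z z k) i y = 2 * Z y k := by
      have h := euler (f := fun z => Z z k) (α := 2) (y := y) ?_ ?_
      · exact h
      · intro t ht
        rw [hZhom y hy t ht]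
        simp [Pi.smul_apply]
      · exact diffAt_of_contDiffOn hCopen (hZc k) hy
    have h1 : ∑ i, y i * J y i k = 2 * Z y k + (∑ i, y i * A y i) * y k := by
      have hterm : ∀ i, y i * J y i k
          = y i * pd (fun z => Z z k) i y + y i * A y i * y k := by
        intro i; rw [hdec y hy i k]; ring
      simp_rw [hterm]
      rw [Finset.sum_add_distrib, hEulerZ, Finset.sum_mul]
    simp only [hZh_def]
    rw [h1, ha_eq y hy]
    ring
  refine ⟨U, Zh, Ah, hUopen, hUconic, hUnz, hCU, hZh_smooth, hZh_hom, hAh_smooth, hAh_hom, ?_⟩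
  intro y hy
  refine ⟨hZh_eqC y hy, ?_⟩
  funext i
  have hpdZZ : ∀ k, pd (fun z => Zh z k) i y = pd (fun z => Z z k) i y := by
    intro k
    have heq : (fun z => Zh z k) =ᶠ[nhds y] (fun z => Z z k) := by
      filter_upwards [hCopen.mem_nhds hy] with z hz
      rw [hZh_eqC z hz]
    show fderiv ℝ (fun z => Zh z k) y (Pi.single i 1)
        = fderiv ℝ (fun z => Z z k) y (Pi.single i 1)
    rw [heq.fderiv_eq]
  have hnum2 : (∑ k, J y i k * y k) - ∑ k, pd (fun z => Zh z k) i y * y k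
      = A y i * ∑ k, y k * y k := by
    simp_rw [hpdZZ]
    have hterm : ∀ k, J y i k * y k
        = pd (fun z => Z z k) i y * y k + A y i * (y k * y k) := by
      intro k; rw [hdec y hy i k]; ring
    simp_rw [hterm]
    rw [Finset.sum_add_distrib, ← Finset.mul_sum]
    ring
  simp only [hAh_def]
  rw [hnum2, mul_div_assoc, div_self (den_pos (hCnz y hy)).ne', mul_one]
end
end

section
/- Invariance of the Ricci scalar under torsion translations (Lemma 4.5, coordinate form): Let n ≥ 2 and let Ω ⊆ ℝ^n × (ℝ^n ∖ {0}) be open with conic fibers. Let N = (N_i^k) : Ω → ℝ be smooth and positively 1-homogeneous in y; set δ_i := ∂/∂x^i − N_i^a ∂/∂y^a and define the Ricci scalar Ric[N] := y^b ( δ_a N_b^a − δ_b N_a^a ). Then for every smooth A = (A_1,…,A_n) : Ω → ℝ^n, positively 0-homogeneous in y, the connection N* defined by (N*)_i^k := N_i^k + A_i y^k satisfies Ric[N*] = Ric[N] on Ω. -/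
open scoped BigOperators

noncomputable section

/-- A point of `ℝ^n × ℝ^n` (base coordinates `x`, fiber coordinates `y`). -/
abbrev Pt (n : ℕ) : Type := (Fin n → ℝ) × (Fin n → ℝ)

/-- Partial derivative `∂f/∂x^i` in the base variables. -/
def pdx {n : ℕ} (f : Pt n → ℝ) (i : Fin n) : Pt n → ℝ :=
  fun p => fderiv ℝ f p (Pi.single i 1, 0)

/-- Partial derivative `∂f/∂y^i` in the fiber variables. -/
def pdy {n : ℕ} (f : Pt n → ℝ) (i : Fin n) : Pt n → ℝ :=
  fun p => fderiv ℝ f p (0, Pi.single i 1)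

/-- Fundamental tensor `g_ij(x,y) = (1/2) ∂²L/∂y^i∂y^j`. -/
def gmet2 {n : ℕ} (L : Pt n → ℝ) (p : Pt n) : Matrix (Fin n) (Fin n) ℝ :=
  Matrix.of fun i j => (1 / 2) * pdy (pdy L i) j p

/-- Inverse fundamental tensor `g^{ij}`. -/
def ginv2 {n : ℕ} (L : Pt n → ℝ) (p : Pt n) : Matrix (Fin n) (Fin n) ℝ :=
  (gmet2 L p)⁻¹

/-- Metric spray `(G^L)^i = (1/4) g^{ia} (2 ∂g_{ab}/∂x^c − ∂g_{bc}/∂x^a) y^b y^c`. -/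
def spray {n : ℕ} (L : Pt n → ℝ) (p : Pt n) (i : Fin n) : ℝ :=
  (1 / 4) * ∑ a, ginv2 L p i a *
    ∑ b, ∑ c, (2 * pdx (fun q => gmet2 L q a b) c p - pdx (fun q => gmet2 L q b c) a p)
      * p.2 b * p.2 c

/-- Metric nonlinear connection `(N^L)_i^k = ∂(G^L)^k/∂y^i`. -/
def metricConn {n : ℕ} (L : Pt n → ℝ) (p : Pt n) (i k : Fin n) : ℝ :=
  pdy (fun q => spray L q k) i p

/-- Horizontal derivative `δ_i f = ∂f/∂x^i − N_i^a ∂f/∂y^a`. -/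
def deltaH {n : ℕ} (N : Pt n → Fin n → Fin n → ℝ) (i : Fin n) (f : Pt n → ℝ) (p : Pt n) : ℝ :=
  pdx f i p - ∑ a, N p i a * pdy f a p

/-- Ricci scalar `Ric[N] = y^b (δ_a N_b^a − δ_b N_a^a)` of a nonlinear connection. -/
def RicciScalar {n : ℕ} (N : Pt n → Fin n → Fin n → ℝ) (p : Pt n) : ℝ :=
  ∑ b, p.2 b *
    ((∑ a, deltaH N a (fun q => N q b a) p) - (∑ a, deltaH N b (fun q => N q a a) p))

/-- `γ` is an `N`-geodesic on the interval `I`: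
`γ` is `C²` on `I`, `(γ, γ̇)` stays in `Ω`, and `γ̈^k + N^k_a(γ,γ̇) γ̇^a = 0` on `I`. -/
def IsGeodesicOn {n : ℕ} (Ω : Set (Pt n)) (N : Pt n → Fin n → Fin n → ℝ)
    (γ : ℝ → Fin n → ℝ) (I : Set ℝ) : Prop :=
  ContDiffOn ℝ 2 γ I ∧ (∀ t ∈ I, (γ t, deriv γ t) ∈ Ω) ∧
    ∀ t ∈ I, ∀ k, deriv (fun s => deriv γ s k) t
      + ∑ a, N (γ t, deriv γ t) a k * deriv γ t a = 0

lemma snd_apply_hasFDerivAt (a : Fin n) (p : Pt n) :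
    HasFDerivAt (fun q : Pt n => q.2 a)
      ((ContinuousLinearMap.proj a : ((Fin n → ℝ)) →L[ℝ] ℝ).comp
        (ContinuousLinearMap.snd ℝ (Fin n → ℝ) (Fin n → ℝ))) p :=
  (((ContinuousLinearMap.proj a).comp
    (ContinuousLinearMap.snd ℝ (Fin n → ℝ) (Fin n → ℝ))).hasFDerivAt).congr_of_eventuallyEq
    (Filter.Eventually.of_forall fun q => rfl)

lemma diff_snd_apply (a : Fin n) (p : Pt n) :
    DifferentiableAt ℝ (fun q : Pt n => q.2 a) p :=
  (snd_apply_hasFDerivAt a p).differentiableAt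

lemma fderiv_snd_apply (a : Fin n) (p v : Pt n) :
    fderiv ℝ (fun q : Pt n => q.2 a) p v = v.2 a := by
  rw [(snd_apply_hasFDerivAt a p).fderiv]; rfl

lemma fderiv_mul_snd {f : Pt n → ℝ} {p : Pt n} (hf : DifferentiableAt ℝ f p) (a : Fin n)
    (v : Pt n) :
    fderiv ℝ (fun q => f q * q.2 a) p v = fderiv ℝ f p v * p.2 a + f p * v.2 a := by
  rw [fderiv_fun_mul hf (diff_snd_apply a p)]
  simp [fderiv_snd_apply]
  ring

lemma euler_aux {f : Pt n → ℝ} {p : Pt n} (hf : DifferentiableAt ℝ f p) {g : ℝ → ℝ} {D : ℝ}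
    (hg : HasDerivAt g D 1) (h : ∀ t : ℝ, 0 < t → f (p.1, t • p.2) = g t) :
    fderiv ℝ f p ((0 : Fin n → ℝ), p.2) = D := by
  have hc : HasDerivAt (fun t : ℝ => ((p.1, t • p.2) : Pt n)) ((0 : Fin n → ℝ), p.2) 1 := by
    have h1 : HasDerivAt (fun t : ℝ => t • (((0 : Fin n → ℝ), p.2) : Pt n))
        (((0 : Fin n → ℝ), p.2) : Pt n) 1 := by
      simpa using (hasDerivAt_id (1:ℝ)).smul_const (((0 : Fin n → ℝ), p.2) : Pt n)
    have h2 := h1.const_add ((p.1, (0 : Fin n → ℝ)) : Pt n)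
    refine h2.congr_of_eventuallyEq (Filter.Eventually.of_forall fun t => ?_)
    ext <;> simp [Prod.smul_def]
  have hc1 : ((p.1, (1:ℝ) • p.2) : Pt n) = p := by simp
  have hf' : HasFDerivAt f (fderiv ℝ f p) ((p.1, (1:ℝ) • p.2) : Pt n) := by
    rw [hc1]; exact hf.hasFDerivAt
  have hcomp : HasDerivAt (fun t : ℝ => f (p.1, t • p.2))
      (fderiv ℝ f p ((0 : Fin n → ℝ), p.2)) 1 := by
    exact hf'.comp_hasDerivAt 1 hc
  have heq : (fun t : ℝ => f (p.1, t • p.2)) =ᶠ[nhds (1:ℝ)] g :=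
    Filter.eventually_of_mem (Ioi_mem_nhds one_pos) (fun t ht => h t ht)
  exact (hg.unique (hcomp.congr_of_eventuallyEq heq.symm)).symm

lemma fderiv_pair_sum (f : Pt n → ℝ) (p : Pt n) :
    fderiv ℝ f p ((0 : Fin n → ℝ), p.2) = ∑ c, p.2 c * pdy f c p := by
  have hv : (((0 : Fin n → ℝ), p.2) : Pt n)
      = ∑ c, p.2 c • ((((0 : Fin n → ℝ), Pi.single c 1)) : Pt n) := by
    ext j
    · simp [Prod.fst_sum]
    · simp [Prod.snd_sum, Finset.sum_apply, Pi.single_apply]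
  rw [hv, map_sum]
  refine Finset.sum_congr rfl fun c _ => ?_
  rw [map_smul]
  simp [pdy]

/-- **Invariance of the Ricci scalar under torsion translations** (Lemma 4.5, coordinate
form). For a smooth homogeneous nonlinear connection `N` on `Ω` and any smooth
0-homogeneous `A`, the connection `(N*)_i^k := N_i^k + A_i y^k` has the same Ricci
scalar as `N` on `Ω`. -/
theorem ricci_invariant_under_torsion_translation
    {n : ℕ} (hn : 2 ≤ n) (Ω : Set (Pt n)) (hΩopen : IsOpen Ω)
    (hΩconic : ∀ p ∈ Ω, ∀ t : ℝ, 0 < t → (p.1, t • p.2) ∈ Ω)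
    (hΩnz : ∀ p ∈ Ω, p.2 ≠ 0)
    (N : Pt n → Fin n → Fin n → ℝ)
    (hNsmooth : ContDiffOn ℝ (⊤ : ℕ∞) N Ω)
    (hNhom : ∀ p ∈ Ω, ∀ t : ℝ, 0 < t → N (p.1, t • p.2) = t • N p)
    (A : Pt n → Fin n → ℝ)
    (hAsmooth : ContDiffOn ℝ (⊤ : ℕ∞) A Ω)
    (hAhom : ∀ p ∈ Ω, ∀ t : ℝ, 0 < t → A (p.1, t • p.2) = A p) :
    ∀ p ∈ Ω,
      RicciScalar (fun q i k => N q i k + A q i * q.2 k) p = RicciScalar N p := by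
  intro p hp
  classical
  have hmem : Ω ∈ nhds p := hΩopen.mem_nhds hp
  have hNd : ∀ b a, DifferentiableAt ℝ (fun q => N q b a) p := by
    intro b a
    have h1 : DifferentiableAt ℝ N p :=
      (hNsmooth.contDiffAt hmem).differentiableAt (by simp)
    exact differentiableAt_pi.mp (differentiableAt_pi.mp h1 b) a
  have hAd : ∀ b, DifferentiableAt ℝ (fun q => A q b) p := by
    intro b
    have h1 : DifferentiableAt ℝ A p :=
      (hAsmooth.contDiffAt hmem).differentiableAt (by simp)
    exact differentiableAt_pi.mp h1 b
  have eulerN : ∀ b a, (∑ c, p.2 c * pdy (fun q => N q b a) c p) = N p b a := by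
    intro b a
    rw [← fderiv_pair_sum]
    refine euler_aux (hNd b a) (hasDerivAt_mul_const (N p b a)) (fun t ht => ?_)
    have := congrFun (congrFun (hNhom p hp t ht) b) a
    simpa [Pi.smul_apply, smul_eq_mul] using this
  have eulerA : ∀ b, (∑ c, p.2 c * pdy (fun q => A q b) c p) = 0 := by
    intro b
    rw [← fderiv_pair_sum]
    refine euler_aux (hAd b) (hasDerivAt_const 1 (A p b)) (fun t ht => ?_)
    exact congrFun (hAhom p hp t ht) b
  have hMx : ∀ b a i, pdx (fun q => N q b a + A q b * q.2 a) i p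
      = pdx (fun q => N q b a) i p + pdx (fun q => A q b) i p * p.2 a := by
    intro b a i
    unfold pdx
    rw [fderiv_fun_add (g := fun q => A q b * q.2 a) (hNd b a) ((hAd b).mul (diff_snd_apply a p)),
      ContinuousLinearMap.add_apply, fderiv_mul_snd (hAd b) a]
    simp
  have hMy : ∀ b a c, pdy (fun q => N q b a + A q b * q.2 a) c p
      = pdy (fun q => N q b a) c p + pdy (fun q => A q b) c p * p.2 a
        + A p b * (if a = c then (1:ℝ) else 0) := by
    intro b a c
    unfold pdy
    rw [fderiv_fun_add (g := fun q => A q b * q.2 a) (hNd b a) ((hAd b).mul (diff_snd_apply a p)),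
      ContinuousLinearMap.add_apply, fderiv_mul_snd (hAd b) a]
    simp [Pi.single_apply, add_assoc]
  have hDelta : ∀ i b a,
      deltaH (fun q i k => N q i k + A q i * q.2 k) i (fun q => N q b a + A q b * q.2 a) p
        = deltaH N i (fun q => N q b a) p
          + pdx (fun q => A q b) i p * p.2 a
          - (∑ c, N p i c * pdy (fun q => A q b) c p) * p.2 a
          - A p b * N p i a - A p i * N p b a - A p i * A p b * p.2 a := by
    intro i b a
    unfold deltaH
    beta_reduce
    rw [hMx b a i]
    have hterm : ∀ c : Fin n,
        (N p i c + A p i * p.2 c) * pdy (fun q => N q b a + A q b * q.2 a) c p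
        = N p i c * pdy (fun q => N q b a) c p
          + (N p i c * pdy (fun q => A q b) c p) * p.2 a
          + A p b * (if a = c then N p i c else 0)
          + A p i * (p.2 c * pdy (fun q => N q b a) c p)
          + (A p i * p.2 a) * (p.2 c * pdy (fun q => A q b) c p)
          + (A p i * A p b) * (if a = c then p.2 c else 0) := by
      intro c
      rw [hMy b a c]
      by_cases h : a = c <;> simp [h] <;> ring
    rw [Finset.sum_congr rfl (fun c _ => hterm c)]
    rw [Finset.sum_add_distrib, Finset.sum_add_distrib, Finset.sum_add_distrib,
      Finset.sum_add_distrib, Finset.sum_add_distrib]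
    rw [← Finset.sum_mul, ← Finset.mul_sum, ← Finset.mul_sum, ← Finset.mul_sum,
      ← Finset.mul_sum]
    rw [Finset.sum_ite_eq, Finset.sum_ite_eq, eulerN b a, eulerA b]
    simp only [Finset.mem_univ, if_true, mul_zero]
    ring
  have antisym : ∀ F : Fin n → Fin n → ℝ, (∀ a b, F a b = - F b a) →
      (∑ b, ∑ a, F a b) = 0 := by
    intro F hF
    have h1 : (∑ b, ∑ a, F a b) = ∑ a, ∑ b, F a b := Finset.sum_comm
    have h2 : (∑ a : Fin n, ∑ b, F a b) = - ∑ a : Fin n, ∑ b, F b a := by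
      rw [← Finset.sum_neg_distrib]
      refine Finset.sum_congr rfl fun a _ => ?_
      rw [← Finset.sum_neg_distrib]
      exact Finset.sum_congr rfl fun b _ => hF a b
    have h3 : (∑ a : Fin n, ∑ b, F b a) = ∑ b : Fin n, ∑ a, F a b := rfl
    rw [h3] at h2
    linarith [h1, h2]
  have key : ∀ b,
      ((∑ a, deltaH (fun q i k => N q i k + A q i * q.2 k) a
          (fun q => N q b a + A q b * q.2 a) p)
        - (∑ a, deltaH (fun q i k => N q i k + A q i * q.2 k) b
          (fun q => N q a a + A q a * q.2 a) p))
      - ((∑ a, deltaH N a (fun q => N q b a) p) - (∑ a, deltaH N b (fun q => N q a a) p))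
      = ∑ a, (p.2 a * pdx (fun q => A q b) a p - p.2 a * pdx (fun q => A q a) b p
          - p.2 a * (∑ c, N p a c * pdy (fun q => A q b) c p)
          + p.2 a * (∑ c, N p b c * pdy (fun q => A q a) c p)) := by
    intro b
    rw [← Finset.sum_sub_distrib, ← Finset.sum_sub_distrib, ← Finset.sum_sub_distrib]
    refine Finset.sum_congr rfl fun a _ => ?_
    rw [hDelta a b a, hDelta b a a]
    ring
  have hzero : RicciScalar (fun q i k => N q i k + A q i * q.2 k) p - RicciScalar N p = 0 := by
    unfold RicciScalar
    beta_reduce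
    rw [← Finset.sum_sub_distrib]
    have hb : ∀ b ∈ Finset.univ,
        p.2 b * ((∑ a, deltaH (fun q i k => N q i k + A q i * q.2 k) a
            (fun q => N q b a + A q b * q.2 a) p)
          - (∑ a, deltaH (fun q i k => N q i k + A q i * q.2 k) b
            (fun q => N q a a + A q a * q.2 a) p))
        - p.2 b * ((∑ a, deltaH N a (fun q => N q b a) p)
          - (∑ a, deltaH N b (fun q => N q a a) p))
        = ∑ a, p.2 b * (p.2 a * pdx (fun q => A q b) a p - p.2 a * pdx (fun q => A q a) b p
            - p.2 a * (∑ c, N p a c * pdy (fun q => A q b) c p)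
            + p.2 a * (∑ c, N p b c * pdy (fun q => A q a) c p)) := by
      intro b _
      rw [← mul_sub, ← Finset.mul_sum, ← key b]
    rw [Finset.sum_congr rfl hb]
    exact antisym _ (fun a b => by ring)
  linarith [hzero]
end
end

section
/- Coordinate form of Prop. 4.17 (constancy of L along geodesics): Let L : Ω → ℝ be as in the context, nowhere zero on Ω, with metric spray G^L and metric nonlinear connection N^L. Let Z : Ω → ℝ^n be smooth and positively 2-homogeneous in y, let A = (A_i) : Ω → ℝ^n be smooth and positively 0-homogeneous in y, and set N_i^k := (N^L)_i^k + Z^k_{·i} + A_i y^k. Then the function t ↦ L(γ(t), γ̇(t)) is constant for every N-geodesic γ if and only if A_a(x,y) y^a = −2 g_{ab}(x,y) y^a Z^b(x,y) / L(x,y) for all (x,y) ∈ Ω. -/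
open scoped BigOperators

noncomputable section

set_option linter.unusedSectionVars false

section Toolkit
variable {n : ℕ} {Ω : Set (Pt n)}

lemma contDiffOn_fderiv_apply (hΩ : IsOpen Ω) {f : Pt n → ℝ}
    (hf : ContDiffOn ℝ (⊤ : ℕ∞) f Ω) (v : Pt n) :
    ContDiffOn ℝ (⊤ : ℕ∞) (fun p => fderiv ℝ f p v) Ω :=
  (hf.fderiv_of_isOpen hΩ (by simp)).clm_apply contDiffOn_const

lemma contDiffOn_pdx (hΩ : IsOpen Ω) {f : Pt n → ℝ}
    (hf : ContDiffOn ℝ (⊤ : ℕ∞) f Ω) (i : Fin n) :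
    ContDiffOn ℝ (⊤ : ℕ∞) (pdx f i) Ω :=
  contDiffOn_fderiv_apply hΩ hf _

lemma contDiffOn_pdy (hΩ : IsOpen Ω) {f : Pt n → ℝ}
    (hf : ContDiffOn ℝ (⊤ : ℕ∞) f Ω) (i : Fin n) :
    ContDiffOn ℝ (⊤ : ℕ∞) (pdy f i) Ω :=
  contDiffOn_fderiv_apply hΩ hf _

lemma diffAt (hΩ : IsOpen Ω) {f : Pt n → ℝ} (hf : ContDiffOn ℝ (⊤ : ℕ∞) f Ω)
    {p : Pt n} (hp : p ∈ Ω) : DifferentiableAt ℝ f p :=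
  ((hf.differentiableOn (by simp)).differentiableAt (hΩ.mem_nhds hp))

lemma clm_apply_decomp (φ : Pt n →L[ℝ] ℝ) (v : Pt n) :
    φ v = (∑ a, v.1 a * φ (Pi.single a 1, 0)) + ∑ a, v.2 a * φ (0, Pi.single a 1) := by
  have hv : v = (∑ a, v.1 a • (((Pi.single a 1 : Fin n → ℝ), (0 : Fin n → ℝ)) : Pt n))
      + ∑ a, v.2 a • (((0 : Fin n → ℝ), (Pi.single a 1 : Fin n → ℝ)) : Pt n) := by
    refine Prod.ext ?_ ?_ <;> funext j <;>
      simp [Prod.fst_sum, Prod.snd_sum, Finset.sum_apply, Pi.single_apply, mul_ite,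
        Finset.sum_ite_eq, Finset.sum_ite_eq']
  conv_lhs => rw [hv]
  rw [map_add, map_sum, map_sum]
  simp only [map_smul, smul_eq_mul]

lemma pdy_congr (hΩ : IsOpen Ω) {f g : Pt n → ℝ} (h : ∀ q ∈ Ω, f q = g q)
    {p : Pt n} (hp : p ∈ Ω) (i : Fin n) : pdy f i p = pdy g i p := by
  have : f =ᶠ[nhds p] g := Filter.eventuallyEq_of_mem (hΩ.mem_nhds hp) h
  simp only [pdy, this.fderiv_eq]
end Toolkit

section Toolkit2
variable {n : ℕ} {Ω : Set (Pt n)}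

/-- Euler's theorem for positively homogeneous functions. -/
lemma euler_s9 {f : Pt n → ℝ} {p : Pt n} (hf : DifferentiableAt ℝ f p) {α : ℕ}
    (h : ∀ t : ℝ, 0 < t → f (p.1, t • p.2) = t ^ α * f p) :
    ∑ a, p.2 a * pdy f a p = α * f p := by
  have hc : HasDerivAt (fun t : ℝ => ((p.1, t • p.2) : Pt n)) ((0 : Fin n → ℝ), p.2) 1 := by
    refine HasDerivAt.prodMk (hasDerivAt_const _ _) ?_
    simpa using (hasDerivAt_id (1 : ℝ)).smul_const p.2
  have hf' : HasFDerivAt f (fderiv ℝ f p) ((fun t : ℝ => ((p.1, t • p.2) : Pt n)) 1) := by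
    simpa using hf.hasFDerivAt
  have H : HasDerivAt (fun t : ℝ => f (p.1, t • p.2)) (fderiv ℝ f p (0, p.2)) 1 :=
    hf'.comp_hasDerivAt 1 hc
  have hev : (fun t : ℝ => f (p.1, t • p.2)) =ᶠ[nhds 1] fun t => t ^ α * f p := by
    filter_upwards [eventually_gt_nhds (by norm_num : (0:ℝ) < 1)] with t ht
    exact h t ht
  have H2 : HasDerivAt (fun t : ℝ => t ^ α * f p) (fderiv ℝ f p (0, p.2)) 1 :=
    H.congr_of_eventuallyEq hev.symm
  have H3 : HasDerivAt (fun t : ℝ => t ^ α * f p) ((α : ℝ) * f p) 1 := by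
    simpa using (hasDerivAt_pow α 1).mul_const (f p)
  have hEq : fderiv ℝ f p (0, p.2) = (α : ℝ) * f p := H2.unique H3
  rw [← hEq, clm_apply_decomp]
  simp [pdy]

/-- Scaling identity for the fiber derivative of a homogeneous function. -/
lemma fderiv_hom_scale (hΩ : IsOpen Ω)
    (hΩconic : ∀ p ∈ Ω, ∀ t : ℝ, 0 < t → ((p.1, t • p.2) : Pt n) ∈ Ω)
    {f : Pt n → ℝ} (hf : ContDiffOn ℝ (⊤ : ℕ∞) f Ω) {α : ℕ}
    (hhom : ∀ p ∈ Ω, ∀ t : ℝ, 0 < t → f (p.1, t • p.2) = t ^ α * f p)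
    {p : Pt n} (hp : p ∈ Ω) {t : ℝ} (ht : 0 < t) (v : Pt n) :
    fderiv ℝ f (p.1, t • p.2) (v.1, t • v.2) = t ^ α * fderiv ℝ f p v := by
  set m : Pt n →L[ℝ] Pt n :=
    (ContinuousLinearMap.fst ℝ (Fin n → ℝ) (Fin n → ℝ)).prod
      (t • ContinuousLinearMap.snd ℝ (Fin n → ℝ) (Fin n → ℝ)) with hm
  have hmq : ∀ q : Pt n, m q = (q.1, t • q.2) := fun q => rfl
  have hmem : ((p.1, t • p.2) : Pt n) ∈ Ω := hΩconic p hp t ht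
  have hcomp : fderiv ℝ (fun q => f (m q)) p = (fderiv ℝ f (m p)).comp m := by
    have := fderiv_comp (𝕜 := ℝ) p (by rw [hmq]; exact diffAt hΩ hf hmem) m.differentiableAt
    simpa [Function.comp_def, m.fderiv] using this
  have hev : (fun q => f (m q)) =ᶠ[nhds p] fun q => t ^ α * f q := by
    filter_upwards [hΩ.mem_nhds hp] with q hq
    rw [hmq]; exact hhom q hq t ht
  have hconst : fderiv ℝ (fun q => t ^ α * f q) p = (t ^ α : ℝ) • fderiv ℝ f p :=
    ((diffAt hΩ hf hp).hasFDerivAt.const_mul ((t : ℝ) ^ α)).fderiv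
  have := hev.fderiv_eq (𝕜 := ℝ)
  rw [hcomp, hconst] at this
  have := congrFun (congrArg (fun (φ : Pt n →L[ℝ] ℝ) => (φ : Pt n → ℝ)) this) v
  simpa [hmq, smul_eq_mul] using this

lemma hom_pdx (hΩ : IsOpen Ω)
    (hΩconic : ∀ p ∈ Ω, ∀ t : ℝ, 0 < t → ((p.1, t • p.2) : Pt n) ∈ Ω)
    {f : Pt n → ℝ} (hf : ContDiffOn ℝ (⊤ : ℕ∞) f Ω) {α : ℕ}
    (hhom : ∀ p ∈ Ω, ∀ t : ℝ, 0 < t → f (p.1, t • p.2) = t ^ α * f p) (i : Fin n) :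
    ∀ p ∈ Ω, ∀ t : ℝ, 0 < t → pdx f i (p.1, t • p.2) = t ^ α * pdx f i p := by
  intro p hp t ht
  have := fderiv_hom_scale hΩ hΩconic hf hhom hp ht ((Pi.single i 1 : Fin n → ℝ), 0)
  simpa [pdx, smul_zero] using this

lemma hom_pdy (hΩ : IsOpen Ω)
    (hΩconic : ∀ p ∈ Ω, ∀ t : ℝ, 0 < t → ((p.1, t • p.2) : Pt n) ∈ Ω)
    {f : Pt n → ℝ} (hf : ContDiffOn ℝ (⊤ : ℕ∞) f Ω) {α : ℕ}
    (hhom : ∀ p ∈ Ω, ∀ t : ℝ, 0 < t → f (p.1, t • p.2) = t ^ (α + 1) * f p) (i : Fin n) :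
    ∀ p ∈ Ω, ∀ t : ℝ, 0 < t → pdy f i (p.1, t • p.2) = t ^ α * pdy f i p := by
  intro p hp t ht
  have h1 := fderiv_hom_scale hΩ hΩconic hf hhom hp ht ((0 : Fin n → ℝ), Pi.single i 1)
  have h2 : fderiv ℝ f (p.1, t • p.2) ((0 : Fin n → ℝ), t • (Pi.single i 1 : Fin n → ℝ))
      = t * pdy f i (p.1, t • p.2) := by
    have : (((0 : Fin n → ℝ), t • (Pi.single i 1 : Fin n → ℝ)) : Pt n)
        = t • (((0 : Fin n → ℝ), (Pi.single i 1 : Fin n → ℝ)) : Pt n) := by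
      simp [Prod.smul_mk]
    rw [this, map_smul, smul_eq_mul]; rfl
  rw [h2] at h1
  have ht' : t ≠ 0 := ne_of_gt ht
  have hY : pdy f i p = fderiv ℝ f p (0, Pi.single i 1) := rfl
  refine mul_left_cancel₀ ht' ?_
  rw [h1, ← hY, pow_succ]; ring

end Toolkit2

section Toolkit3
variable {n : ℕ} {Ω : Set (Pt n)}

lemma fderiv_swap (hΩ : IsOpen Ω) {f : Pt n → ℝ} (hf : ContDiffOn ℝ (⊤ : ℕ∞) f Ω)
    {p : Pt n} (hp : p ∈ Ω) (v w : Pt n) :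
    fderiv ℝ (fun q => fderiv ℝ f q v) p w = fderiv ℝ (fun q => fderiv ℝ f q w) p v := by
  have hdf : DifferentiableAt ℝ (fderiv ℝ f) p :=
    (((hf.fderiv_of_isOpen hΩ (m := 1) (by decide)).differentiableOn
      one_ne_zero).differentiableAt (hΩ.mem_nhds hp))
  have key : ∀ u : Pt n, fderiv ℝ (fun q => fderiv ℝ f q u) p
      = (ContinuousLinearMap.apply ℝ ℝ u).comp (fderiv ℝ (fderiv ℝ f) p) := by
    intro u
    have : (fun q => fderiv ℝ f q u)
        = (ContinuousLinearMap.apply ℝ ℝ u) ∘ (fderiv ℝ f) := rfl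
    rw [this, fderiv_comp (𝕜 := ℝ) p (ContinuousLinearMap.apply ℝ ℝ u).differentiableAt hdf,
      ContinuousLinearMap.fderiv]
  have hsymm : IsSymmSndFDerivAt ℝ f p := by
    refine (hf.contDiffAt (hΩ.mem_nhds hp)).isSymmSndFDerivAt ?_
    simp; exact WithTop.coe_le_coe.2 (le_top : (2:ℕ∞) ≤ ⊤)
  rw [key v, key w]
  simpa using hsymm w v

lemma pdx_pdy_swap (hΩ : IsOpen Ω) {f : Pt n → ℝ} (hf : ContDiffOn ℝ (⊤ : ℕ∞) f Ω)
    {p : Pt n} (hp : p ∈ Ω) (i c : Fin n) :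
    pdx (pdy f i) c p = pdy (pdx f c) i p :=
  fderiv_swap hΩ hf hp _ _

lemma pdy_pdy_swap (hΩ : IsOpen Ω) {f : Pt n → ℝ} (hf : ContDiffOn ℝ (⊤ : ℕ∞) f Ω)
    {p : Pt n} (hp : p ∈ Ω) (i j : Fin n) :
    pdy (pdy f i) j p = pdy (pdy f j) i p :=
  fderiv_swap hΩ hf hp _ _

lemma pdx_const_mul {f : Pt n → ℝ} {p : Pt n} (hf : DifferentiableAt ℝ f p) (r : ℝ) (c : Fin n) :
    pdx (fun q => r * f q) c p = r * pdx f c p := by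
  simp only [pdx]
  rw [(hf.hasFDerivAt.const_mul r).fderiv]
  simp

lemma pdy_const_mul {f : Pt n → ℝ} {p : Pt n} (hf : DifferentiableAt ℝ f p) (r : ℝ) (c : Fin n) :
    pdy (fun q => r * f q) c p = r * pdy f c p := by
  simp only [pdy]
  rw [(hf.hasFDerivAt.const_mul r).fderiv]
  simp

end Toolkit3

section Det
variable {n : ℕ} {Ω : Set (Pt n)}

lemma contDiffOn_finset_prod {ι : Type*} {f : ι → Pt n → ℝ} {s : Finset ι}
    (h : ∀ i ∈ s, ContDiffOn ℝ (⊤ : ℕ∞) (f i) Ω) :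
    ContDiffOn ℝ (⊤ : ℕ∞) (fun p => ∏ i ∈ s, f i p) Ω := by
  classical
  induction s using Finset.induction with
  | empty => simpa using contDiffOn_const
  | insert a s' hx ih =>
    simp only [Finset.prod_insert hx]
    exact (h a (Finset.mem_insert_self a s')).mul
      (ih fun i hi => h i (Finset.mem_insert_of_mem hi))

lemma contDiffOn_det {M : Pt n → Matrix (Fin n) (Fin n) ℝ}
    (hM : ∀ i j, ContDiffOn ℝ (⊤ : ℕ∞) (fun p => M p i j) Ω) :
    ContDiffOn ℝ (⊤ : ℕ∞) (fun p => (M p).det) Ω := by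
  simp only [Matrix.det_apply, Units.smul_def, zsmul_eq_mul]
  exact ContDiffOn.sum fun σ _ =>
    contDiffOn_const.mul (contDiffOn_finset_prod fun i _ => hM (σ i) i)

lemma contDiffOn_adjugate {M : Pt n → Matrix (Fin n) (Fin n) ℝ}
    (hM : ∀ i j, ContDiffOn ℝ (⊤ : ℕ∞) (fun p => M p i j) Ω) (i j : Fin n) :
    ContDiffOn ℝ (⊤ : ℕ∞) (fun p => (M p).adjugate i j) Ω := by
  classical
  simp only [Matrix.adjugate_apply]
  exact contDiffOn_det fun a b => by
    by_cases haj : a = j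
    · subst haj; simpa [Matrix.updateRow_apply] using contDiffOn_const
    · simpa [Matrix.updateRow_apply, haj] using hM a b

lemma contDiffOn_matrix_inv {M : Pt n → Matrix (Fin n) (Fin n) ℝ}
    (hM : ∀ i j, ContDiffOn ℝ (⊤ : ℕ∞) (fun p => M p i j) Ω)
    (hdet : ∀ p ∈ Ω, IsUnit (M p).det) (i j : Fin n) :
    ContDiffOn ℝ (⊤ : ℕ∞) (fun p => (M p)⁻¹ i j) Ω := by
  have heq : ∀ p ∈ Ω, (M p)⁻¹ i j = ((M p).det)⁻¹ * (M p).adjugate i j := by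
    intro p hp
    rw [Matrix.inv_def, Matrix.smul_apply, Ring.inverse_eq_inv, smul_eq_mul]
  refine ContDiffOn.congr ?_ heq
  exact ((contDiffOn_det hM).inv fun p hp =>
    IsUnit.ne_zero (by simpa using (hdet p hp))).mul (contDiffOn_adjugate hM i j)

end Det

section Geometry
variable {n : ℕ} {Ω : Set (Pt n)} {L : Pt n → ℝ}

lemma gsmooth (hΩ : IsOpen Ω) (hL : ContDiffOn ℝ (⊤ : ℕ∞) L Ω) (a b : Fin n) :
    ContDiffOn ℝ (⊤ : ℕ∞) (fun p => gmet2 L p a b) Ω := by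
  simp only [gmet2, Matrix.of_apply]
  exact contDiffOn_const.mul (contDiffOn_pdy hΩ (contDiffOn_pdy hΩ hL a) b)

lemma gsym (hΩ : IsOpen Ω) (hL : ContDiffOn ℝ (⊤ : ℕ∞) L Ω) {p : Pt n} (hp : p ∈ Ω)
    (a b : Fin n) : gmet2 L p a b = gmet2 L p b a := by
  simp only [gmet2, Matrix.of_apply, pdy_pdy_swap hΩ hL hp a b]

variable (hΩ : IsOpen Ω)
  (hΩconic : ∀ p ∈ Ω, ∀ t : ℝ, 0 < t → ((p.1, t • p.2) : Pt n) ∈ Ω)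
  (hL : ContDiffOn ℝ (⊤ : ℕ∞) L Ω)
  (hLhom : ∀ p ∈ Ω, ∀ t : ℝ, 0 < t → L (p.1, t • p.2) = t ^ 2 * L p)

include hΩ hΩconic hL hLhom

lemma pdyL_hom : ∀ i, ∀ p ∈ Ω, ∀ t : ℝ, 0 < t →
    pdy L i (p.1, t • p.2) = t ^ 1 * pdy L i p := fun i =>
  hom_pdy hΩ hΩconic hL (α := 1) hLhom i

lemma g_entry_hom : ∀ a b, ∀ p ∈ Ω, ∀ t : ℝ, 0 < t →
    (fun q => gmet2 L q a b) (p.1, t • p.2) = t ^ 0 * (fun q => gmet2 L q a b) p := by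
  intro a b p hp t ht
  have := hom_pdy hΩ hΩconic (contDiffOn_pdy hΩ hL a) (α := 0)
    (pdyL_hom hΩ hΩconic hL hLhom a) b p hp t ht
  simpa [gmet2, Matrix.of_apply] using this

lemma ghom {p : Pt n} (hp : p ∈ Ω) {t : ℝ} (ht : 0 < t) :
    gmet2 L (p.1, t • p.2) = gmet2 L p := by
  ext a b
  simpa using g_entry_hom hΩ hΩconic hL hLhom a b p hp t ht

lemma gx_hom : ∀ a b c, ∀ p ∈ Ω, ∀ t : ℝ, 0 < t →
    pdx (fun q => gmet2 L q a b) c (p.1, t • p.2) = pdx (fun q => gmet2 L q a b) c p := by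
  intro a b c p hp t ht
  have := hom_pdx hΩ hΩconic (gsmooth hΩ hL a b) (α := 0)
    (g_entry_hom hΩ hΩconic hL hLhom a b) c p hp t ht
  simpa using this

lemma ginv_hom {p : Pt n} (hp : p ∈ Ω) {t : ℝ} (ht : 0 < t) :
    ginv2 L (p.1, t • p.2) = ginv2 L p := by
  simp only [ginv2, ghom hΩ hΩconic hL hLhom hp ht]

lemma spray_hom : ∀ k, ∀ p ∈ Ω, ∀ t : ℝ, 0 < t →
    spray L (p.1, t • p.2) k = t ^ 2 * spray L p k := by
  intro k p hp t ht
  have hgi : ∀ a, ginv2 L (p.1, t • p.2) k a = ginv2 L p k a := by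
    intro a; rw [ginv_hom hΩ hΩconic hL hLhom hp ht]
  have hInner : ∀ a, (∑ b, ∑ c,
      (2 * pdx (fun q => gmet2 L q a b) c (p.1, t • p.2)
        - pdx (fun q => gmet2 L q b c) a (p.1, t • p.2)) * (t • p.2) b * (t • p.2) c)
      = t ^ 2 * ∑ b, ∑ c, (2 * pdx (fun q => gmet2 L q a b) c p
        - pdx (fun q => gmet2 L q b c) a p) * p.2 b * p.2 c := by
    intro a
    rw [Finset.mul_sum]
    refine Finset.sum_congr rfl fun b _ => ?_
    rw [Finset.mul_sum]
    refine Finset.sum_congr rfl fun c _ => ?_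
    rw [gx_hom hΩ hΩconic hL hLhom a b c p hp t ht,
      gx_hom hΩ hΩconic hL hLhom b c a p hp t ht]
    simp only [Pi.smul_apply, smul_eq_mul]
    ring
  simp only [spray]
  rw [show (∑ a, ginv2 L (p.1, t • p.2) k a * ∑ b, ∑ c,
      (2 * pdx (fun q => gmet2 L q a b) c (p.1, t • p.2)
        - pdx (fun q => gmet2 L q b c) a (p.1, t • p.2)) * (t • p.2) b * (t • p.2) c)
      = ∑ a, t ^ 2 * (ginv2 L p k a * ∑ b, ∑ c,
      (2 * pdx (fun q => gmet2 L q a b) c p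
        - pdx (fun q => gmet2 L q b c) a p) * p.2 b * p.2 c) from
    Finset.sum_congr rfl fun a _ => by rw [hgi a, hInner a]; ring]
  rw [← Finset.mul_sum]
  ring

end Geometry

section Geometry2
variable {n : ℕ} {Ω : Set (Pt n)} {L : Pt n → ℝ}
variable (hΩ : IsOpen Ω)
  (hΩconic : ∀ p ∈ Ω, ∀ t : ℝ, 0 < t → ((p.1, t • p.2) : Pt n) ∈ Ω)
  (hL : ContDiffOn ℝ (⊤ : ℕ∞) L Ω)
  (hLhom : ∀ p ∈ Ω, ∀ t : ℝ, 0 < t → L (p.1, t • p.2) = t ^ 2 * L p)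
  (hginv : ∀ p ∈ Ω, IsUnit (gmet2 L p).det)

include hΩ hΩconic hL hLhom

lemma eulerL : ∀ p ∈ Ω, ∑ a, p.2 a * pdy L a p = 2 * L p := by
  intro p hp
  have := euler_s9 (f := L) (diffAt hΩ hL hp) (α := 2) (fun t ht => hLhom p hp t ht)
  simpa using this

lemma gy :
    ∀ p ∈ Ω, ∀ k, ∑ a, gmet2 L p k a * p.2 a = (1/2) * pdy L k p := by
  intro p hp k
  have he := euler_s9 (f := pdy L k) (diffAt hΩ (contDiffOn_pdy hΩ hL k) hp) (α := 1)
    (fun t ht => pdyL_hom hΩ hΩconic hL hLhom k p hp t ht)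
  simp only [pow_one, Nat.cast_one, one_mul] at he
  calc ∑ a, gmet2 L p k a * p.2 a = ∑ a, (1/2) * (p.2 a * pdy (pdy L k) a p) := by
        refine Finset.sum_congr rfl fun a _ => ?_
        simp only [gmet2, Matrix.of_apply]; ring
    _ = (1/2) * ∑ a, p.2 a * pdy (pdy L k) a p := by rw [← Finset.mul_sum]
    _ = (1/2) * pdy L k p := by rw [he]

lemma gx_contract : ∀ p ∈ Ω, ∀ c,
    (∑ a, ∑ b, pdx (fun q => gmet2 L q a b) c p * p.2 a * p.2 b) = pdx L c p := by
  intro p hp c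
  set h : Pt n → ℝ := pdx L c with hh
  have hhs : ContDiffOn ℝ (⊤ : ℕ∞) h Ω := contDiffOn_pdx hΩ hL c
  have hhhom : ∀ q ∈ Ω, ∀ t : ℝ, 0 < t → h (q.1, t • q.2) = t ^ 2 * h q :=
    hom_pdx hΩ hΩconic hL (α := 2) hLhom c
  have hE : ∀ a b, pdx (fun q => gmet2 L q a b) c p = (1/2) * pdy (pdy h a) b p := by
    intro a b
    have hcm : pdx (fun q => gmet2 L q a b) c p
        = (1/2) * pdx (pdy (pdy L a) b) c p := by
      have : (fun q => gmet2 L q a b) = fun q => (1/2) * pdy (pdy L a) b q := rfl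
      rw [this, pdx_const_mul (diffAt hΩ (contDiffOn_pdy hΩ (contDiffOn_pdy hΩ hL a) b) hp)]
    rw [hcm, pdx_pdy_swap hΩ (contDiffOn_pdy hΩ hL a) hp b c]
    congr 1
    refine pdy_congr hΩ (fun q hq => ?_) hp b
    exact pdx_pdy_swap hΩ hL hq a c
  have he1 : ∀ a, ∑ b, p.2 b * pdy (pdy h a) b p = pdy h a p := by
    intro a
    have := euler_s9 (f := pdy h a) (diffAt hΩ (contDiffOn_pdy hΩ hhs a) hp) (α := 1)
      (fun t ht => hom_pdy hΩ hΩconic hhs (α := 1) hhhom a p hp t ht)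
    simpa using this
  have he2 : ∑ a, p.2 a * pdy h a p = 2 * h p := by
    have := euler_s9 (f := h) (diffAt hΩ hhs hp) (α := 2) (fun t ht => hhhom p hp t ht)
    simpa using this
  calc (∑ a, ∑ b, pdx (fun q => gmet2 L q a b) c p * p.2 a * p.2 b)
      = ∑ a, (1/2) * (p.2 a * ∑ b, p.2 b * pdy (pdy h a) b p) := by
        refine Finset.sum_congr rfl fun a _ => ?_
        rw [Finset.mul_sum, Finset.mul_sum]
        refine Finset.sum_congr rfl fun b _ => ?_
        rw [hE a b]; ring
    _ = ∑ a, (1/2) * (p.2 a * pdy h a p) := by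
        refine Finset.sum_congr rfl fun a _ => ?_; rw [he1 a]
    _ = (1/2) * ∑ a, p.2 a * pdy h a p := by rw [← Finset.mul_sum]
    _ = h p := by rw [he2]; ring

end Geometry2

section Geometry3
variable {n : ℕ} {Ω : Set (Pt n)} {L : Pt n → ℝ}
variable (hΩ : IsOpen Ω)
  (hΩconic : ∀ p ∈ Ω, ∀ t : ℝ, 0 < t → ((p.1, t • p.2) : Pt n) ∈ Ω)
  (hL : ContDiffOn ℝ (⊤ : ℕ∞) L Ω)
  (hLhom : ∀ p ∈ Ω, ∀ t : ℝ, 0 < t → L (p.1, t • p.2) = t ^ 2 * L p)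
  (hginv : ∀ p ∈ Ω, IsUnit (gmet2 L p).det)

lemma coord_smooth (b : Fin n) : ContDiff ℝ (⊤ : ℕ∞) (fun p : Pt n => p.2 b) :=
  (ContinuousLinearMap.proj (R := ℝ) (φ := fun _ : Fin n => ℝ) b).contDiff.comp contDiff_snd

include hΩ hL hginv

lemma ginv_smooth (i j : Fin n) : ContDiffOn ℝ (⊤ : ℕ∞) (fun p => ginv2 L p i j) Ω := by
  have := contDiffOn_matrix_inv (Ω := Ω) (M := gmet2 L) (gsmooth hΩ hL) hginv i j
  exact this

lemma spray_smooth (k : Fin n) : ContDiffOn ℝ (⊤ : ℕ∞) (fun p => spray L p k) Ω := by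
  simp only [spray]
  refine contDiffOn_const.mul (ContDiffOn.sum fun a _ => ?_)
  refine (ginv_smooth hΩ hL hginv k a).mul (ContDiffOn.sum fun b _ => ?_)
  refine ContDiffOn.sum fun c _ => ?_
  refine ContDiffOn.mul (ContDiffOn.mul ?_ ((coord_smooth b).contDiffOn)) ?_
  · exact (contDiffOn_const.mul (contDiffOn_pdx hΩ (gsmooth hΩ hL a b) c)).sub
      (contDiffOn_pdx hΩ (gsmooth hΩ hL b c) a)
  · exact (coord_smooth c).contDiffOn

lemma conn_smooth (i k : Fin n) :
    ContDiffOn ℝ (⊤ : ℕ∞) (fun p => metricConn L p i k) Ω := by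
  have : (fun p => metricConn L p i k) = pdy (fun q => spray L q k) i := rfl
  rw [this]
  exact contDiffOn_pdy hΩ (spray_smooth hΩ hL hginv k) i

include hΩconic hLhom

lemma euler_conn : ∀ p ∈ Ω, ∀ k, ∑ a, p.2 a * metricConn L p a k = 2 * spray L p k := by
  intro p hp k
  have := euler_s9 (f := fun q => spray L q k) (diffAt hΩ (spray_smooth hΩ hL hginv k) hp)
    (α := 2) (fun t ht => spray_hom hΩ hΩconic hL hLhom k p hp t ht)
  simpa [metricConn] using this

lemma key1 : ∀ p ∈ Ω, ∑ k, pdy L k p * spray L p k = (1/2) * ∑ a, pdx L a p * p.2 a := by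
  intro p hp
  classical
  set T : Fin n → ℝ := fun a => ∑ b, ∑ c,
    (2 * pdx (fun q => gmet2 L q a b) c p - pdx (fun q => gmet2 L q b c) a p)
      * p.2 b * p.2 c with hT
  have hsp : ∀ k, spray L p k = (1/4) * Matrix.mulVec (ginv2 L p) T k := by
    intro k
    simp only [spray, Matrix.mulVec, dotProduct, hT]
  have hpd : ∀ k, pdy L k p = 2 * Matrix.vecMul p.2 (gmet2 L p) k := by
    intro k
    have h1 := gy hΩ hΩconic hL hLhom p hp k
    have h2 : Matrix.vecMul p.2 (gmet2 L p) k = ∑ a, gmet2 L p k a * p.2 a := by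
      simp only [Matrix.vecMul, dotProduct]
      exact Finset.sum_congr rfl fun a _ => by show p.2 a * gmet2 L p a k = gmet2 L p k a * p.2 a; rw [gsym hΩ hL hp a k]; ring
    rw [h2, h1]; ring
  have hmain : ∑ k, pdy L k p * spray L p k
      = (1/2) * dotProduct (Matrix.vecMul p.2 (gmet2 L p))
          (Matrix.mulVec (ginv2 L p) T) := by
    simp only [dotProduct, Finset.mul_sum]
    refine Finset.sum_congr rfl fun k _ => ?_
    rw [hpd k, hsp k]; ring
  rw [hmain, Matrix.dotProduct_mulVec, Matrix.vecMul_vecMul,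
    show gmet2 L p * ginv2 L p = 1 from Matrix.mul_nonsing_inv _ (hginv p hp),
    Matrix.vecMul_one]
  have hA : ∀ c, ∑ d, ∑ b, pdx (fun q => gmet2 L q d b) c p * p.2 d * p.2 b = pdx L c p :=
    fun c => gx_contract hΩ hΩconic hL hLhom p hp c
  have hB : ∀ d, ∑ b, ∑ c, pdx (fun q => gmet2 L q b c) d p * p.2 b * p.2 c = pdx L d p :=
    fun d => gx_contract hΩ hΩconic hL hLhom p hp d
  have hyT : dotProduct p.2 T = ∑ a, pdx L a p * p.2 a := by
    have step1 : dotProduct p.2 T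
        = ∑ d, ∑ b, ∑ c, ((2:ℝ) * (pdx (fun q => gmet2 L q d b) c p * p.2 d * p.2 b * p.2 c)
            - pdx (fun q => gmet2 L q b c) d p * p.2 b * p.2 c * p.2 d) := by
      simp only [dotProduct, hT]
      refine Finset.sum_congr rfl fun d _ => ?_
      rw [Finset.mul_sum]
      refine Finset.sum_congr rfl fun b _ => ?_
      rw [Finset.mul_sum]
      refine Finset.sum_congr rfl fun c _ => ?_
      ring
    have step2 : dotProduct p.2 T
        = (∑ d, ∑ b, ∑ c, (2:ℝ) * (pdx (fun q => gmet2 L q d b) c p * p.2 d * p.2 b * p.2 c))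
          - ∑ d, ∑ b, ∑ c, pdx (fun q => gmet2 L q b c) d p * p.2 b * p.2 c * p.2 d := by
      rw [step1]
      simp only [Finset.sum_sub_distrib]
    have part1 : (∑ d, ∑ b, ∑ c, (2:ℝ) * (pdx (fun q => gmet2 L q d b) c p * p.2 d * p.2 b * p.2 c))
        = 2 * ∑ a, pdx L a p * p.2 a := by
      have comm1 : (∑ d, ∑ b, ∑ c, (2:ℝ) * (pdx (fun q => gmet2 L q d b) c p * p.2 d * p.2 b * p.2 c))
          = ∑ c, ∑ d, ∑ b, (2:ℝ) * (pdx (fun q => gmet2 L q d b) c p * p.2 d * p.2 b * p.2 c) := by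
        rw [show (∑ d, ∑ b, ∑ c, (2:ℝ) * (pdx (fun q => gmet2 L q d b) c p * p.2 d * p.2 b * p.2 c))
            = ∑ d, ∑ c, ∑ b, (2:ℝ) * (pdx (fun q => gmet2 L q d b) c p * p.2 d * p.2 b * p.2 c) from
          Finset.sum_congr rfl fun d _ => Finset.sum_comm]
        exact Finset.sum_comm
      rw [comm1, Finset.mul_sum]
      refine Finset.sum_congr rfl fun c _ => ?_
      have : (∑ d, ∑ b, (2:ℝ) * (pdx (fun q => gmet2 L q d b) c p * p.2 d * p.2 b * p.2 c))
          = (2 * p.2 c) * ∑ d, ∑ b, pdx (fun q => gmet2 L q d b) c p * p.2 d * p.2 b := by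
        rw [Finset.mul_sum]
        refine Finset.sum_congr rfl fun d _ => ?_
        rw [Finset.mul_sum]
        refine Finset.sum_congr rfl fun b _ => ?_
        ring
      rw [this, hA c]; ring
    have part2 : (∑ d, ∑ b, ∑ c, pdx (fun q => gmet2 L q b c) d p * p.2 b * p.2 c * p.2 d)
        = ∑ a, pdx L a p * p.2 a := by
      refine Finset.sum_congr rfl fun d _ => ?_
      have : (∑ b, ∑ c, pdx (fun q => gmet2 L q b c) d p * p.2 b * p.2 c * p.2 d)
          = p.2 d * ∑ b, ∑ c, pdx (fun q => gmet2 L q b c) d p * p.2 b * p.2 c := by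
        rw [Finset.mul_sum]
        refine Finset.sum_congr rfl fun b _ => ?_
        rw [Finset.mul_sum]
        refine Finset.sum_congr rfl fun c _ => ?_
        ring
      rw [this, hB d]; ring
    rw [step2, part1, part2]; ring
  rw [hyT]

end Geometry3

section KeyD
variable {n : ℕ} {Ω : Set (Pt n)} {L : Pt n → ℝ}
variable (hΩ : IsOpen Ω)
  (hΩconic : ∀ p ∈ Ω, ∀ t : ℝ, 0 < t → ((p.1, t • p.2) : Pt n) ∈ Ω)
  (hL : ContDiffOn ℝ (⊤ : ℕ∞) L Ω)
  (hLhom : ∀ p ∈ Ω, ∀ t : ℝ, 0 < t → L (p.1, t • p.2) = t ^ 2 * L p)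
  (hginv : ∀ p ∈ Ω, IsUnit (gmet2 L p).det)
  {Z : Pt n → Fin n → ℝ}
  (hZsmooth : ContDiffOn ℝ (⊤ : ℕ∞) Z Ω)
  (hZhom : ∀ p ∈ Ω, ∀ t : ℝ, 0 < t → Z (p.1, t • p.2) = t ^ 2 • Z p)
  {A : Pt n → Fin n → ℝ}

include hZsmooth in
lemma Zk_smooth (k : Fin n) : ContDiffOn ℝ (⊤ : ℕ∞) (fun q => Z q k) Ω :=
  (ContinuousLinearMap.proj (R := ℝ) (φ := fun _ : Fin n => ℝ) k).contDiff.comp_contDiffOn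
    hZsmooth

include hΩ hΩconic hL hLhom hginv hZsmooth hZhom in
lemma keyD : ∀ p ∈ Ω,
    (∑ a, pdx L a p * p.2 a)
      - (∑ k, pdy L k p * (∑ a,
          (metricConn L p a k + pdy (fun q => Z q k) a p + A p a * p.2 k) * p.2 a))
    = -2 * (L p * (∑ a, A p a * p.2 a)
        + 2 * ∑ a, ∑ b, gmet2 L p a b * p.2 a * Z p b) := by
  intro p hp
  set SA : ℝ := ∑ a, A p a * p.2 a with hSA
  set GZ : ℝ := ∑ a, ∑ b, gmet2 L p a b * p.2 a * Z p b with hGZ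
  have hZe : ∀ k, ∑ a, p.2 a * pdy (fun q => Z q k) a p = 2 * Z p k := by
    intro k
    have hhom : ∀ t : ℝ, 0 < t → (fun q => Z q k) (p.1, t • p.2) = t ^ 2 * (fun q => Z q k) p := by
      intro t ht
      have := hZhom p hp t ht
      calc Z (p.1, t • p.2) k = (t ^ 2 • Z p) k := by rw [this]
        _ = t ^ 2 * Z p k := by simp
    have := euler_s9 (diffAt hΩ (Zk_smooth hZsmooth k) hp) (α := 2) hhom
    simpa using this
  have hconn := euler_conn hΩ hΩconic hL hLhom hginv p hp
  have hK1 := key1 hΩ hΩconic hL hLhom hginv p hp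
  have hEL := eulerL hΩ hΩconic hL hLhom p hp
  have hgyk := gy hΩ hΩconic hL hLhom p hp
  have hZdot : ∑ k, pdy L k p * Z p k = 2 * GZ := by
    calc ∑ k, pdy L k p * Z p k = ∑ k, (2 * ∑ a, gmet2 L p k a * p.2 a) * Z p k := by
          refine Finset.sum_congr rfl fun k _ => ?_
          rw [show pdy L k p = 2 * ∑ a, gmet2 L p k a * p.2 a by rw [hgyk k]; ring]
      _ = ∑ k, ∑ a, 2 * (gmet2 L p k a * p.2 a * Z p k) := by
          refine Finset.sum_congr rfl fun k _ => ?_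
          simp only [Finset.mul_sum, Finset.sum_mul]
          exact Finset.sum_congr rfl fun a _ => by ring
      _ = ∑ a, ∑ k, 2 * (gmet2 L p k a * p.2 a * Z p k) := Finset.sum_comm
      _ = 2 * GZ := by
          rw [hGZ, Finset.mul_sum]
          refine Finset.sum_congr rfl fun a _ => ?_
          rw [Finset.mul_sum]
          refine Finset.sum_congr rfl fun k _ => ?_
          rw [gsym hΩ hL hp k a]
  have hNsum : ∀ k, (∑ a,
      (metricConn L p a k + pdy (fun q => Z q k) a p + A p a * p.2 k) * p.2 a)
      = 2 * spray L p k + 2 * Z p k + p.2 k * SA := by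
    intro k
    have : (∑ a, (metricConn L p a k + pdy (fun q => Z q k) a p + A p a * p.2 k) * p.2 a)
        = (∑ a, p.2 a * metricConn L p a k) + (∑ a, p.2 a * pdy (fun q => Z q k) a p)
          + ∑ a, p.2 k * (A p a * p.2 a) := by
      rw [← Finset.sum_add_distrib, ← Finset.sum_add_distrib]
      exact Finset.sum_congr rfl fun a _ => by ring
    rw [this, hconn k, hZe k, hSA, ← Finset.mul_sum]
  have expand : ∑ k, pdy L k p * (∑ a,
      (metricConn L p a k + pdy (fun q => Z q k) a p + A p a * p.2 k) * p.2 a)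
      = 2 * (∑ k, pdy L k p * spray L p k) + 2 * (∑ k, pdy L k p * Z p k)
        + SA * (∑ k, p.2 k * pdy L k p) := by
    rw [Finset.mul_sum, Finset.mul_sum, Finset.mul_sum,
      ← Finset.sum_add_distrib, ← Finset.sum_add_distrib]
    refine Finset.sum_congr rfl fun k _ => ?_
    rw [hNsum k]; ring
  rw [expand, hK1, hZdot, hEL]
  ring
end KeyD

section Dyn
variable {n : ℕ} {Ω : Set (Pt n)} {L : Pt n → ℝ}

lemma hasDerivAt_comp_curve (hΩ : IsOpen Ω) (hf : ContDiffOn ℝ (⊤ : ℕ∞) L Ω)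
    {c : ℝ → Pt n} {c' : Pt n} {t : ℝ} (hc : HasDerivAt c c' t) (hmem : c t ∈ Ω) :
    HasDerivAt (fun s => L (c s))
      ((∑ a, c'.1 a * pdx L a (c t)) + ∑ a, c'.2 a * pdy L a (c t)) t := by
  have h := (diffAt hΩ hf hmem).hasFDerivAt.comp_hasDerivAt t hc
  have hdec := clm_apply_decomp (fderiv ℝ L (c t)) c'
  rw [hdec] at h
  exact h

lemma deriv_L_along (hΩ : IsOpen Ω) (hL : ContDiffOn ℝ (⊤ : ℕ∞) L Ω)
    {N : Pt n → Fin n → Fin n → ℝ} {γ : ℝ → Fin n → ℝ} {I : Set ℝ} (hI : IsOpen I)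
    (hgeo : IsGeodesicOn Ω N γ I) {t : ℝ} (ht : t ∈ I) :
    HasDerivAt (fun s => L (γ s, deriv γ s))
      ((∑ a, pdx L a (γ t, deriv γ t) * deriv γ t a)
        - ∑ k, pdy L k (γ t, deriv γ t)
            * (∑ a, N (γ t, deriv γ t) a k * deriv γ t a)) t := by
  obtain ⟨hsm, hmem, heq⟩ := hgeo
  have hγ't : HasDerivAt γ (deriv γ t) t :=
    (((hsm.differentiableOn (by decide)).differentiableAt (hI.mem_nhds ht))).hasDerivAt
  have hC1 : ContDiffOn ℝ 1 (deriv γ) I := by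
    have h2 : ContDiffOn ℝ ((1 : ℕ∞) + 1) γ I := by exact_mod_cast hsm
    exact ((contDiffOn_succ_iff_deriv_of_isOpen hI).1 h2).2.2
  have hdd : DifferentiableAt ℝ (deriv γ) t :=
    (hC1.differentiableOn one_ne_zero).differentiableAt (hI.mem_nhds ht)
  have hc : HasDerivAt (fun s => ((γ s, deriv γ s) : Pt n))
      ((deriv γ t, deriv (deriv γ) t)) t := hγ't.prodMk hdd.hasDerivAt
  have h := hasDerivAt_comp_curve hΩ hL hc (hmem t ht)
  have hk : ∀ k, deriv (deriv γ) t k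
      = - ∑ a, N (γ t, deriv γ t) a k * deriv γ t a := by
    intro k
    have h1 : deriv (fun s => deriv γ s k) t = deriv (deriv γ) t k :=
      ((ContinuousLinearMap.proj (R := ℝ) (φ := fun _ : Fin n => ℝ)
        k).hasFDerivAt.comp_hasDerivAt t hdd.hasDerivAt).deriv
    have h2 := heq t ht k
    rw [h1] at h2
    linarith
  have hval : (∑ a, ((deriv γ t, deriv (deriv γ) t) : Pt n).1 a * pdx L a (γ t, deriv γ t))
      + ∑ a, ((deriv γ t, deriv (deriv γ) t) : Pt n).2 a * pdy L a (γ t, deriv γ t)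
      = (∑ a, pdx L a (γ t, deriv γ t) * deriv γ t a)
        - ∑ k, pdy L k (γ t, deriv γ t)
            * (∑ a, N (γ t, deriv γ t) a k * deriv γ t a) := by
    dsimp only
    rw [show (∑ a, deriv (deriv γ) t a * pdy L a (γ t, deriv γ t))
        = ∑ k, -(pdy L k (γ t, deriv γ t) * (∑ a, N (γ t, deriv γ t) a k * deriv γ t a)) from
      Finset.sum_congr rfl fun k _ => by rw [hk k]; ring]
    rw [Finset.sum_neg_distrib]
    rw [show (∑ a, deriv γ t a * pdx L a (γ t, deriv γ t))
        = ∑ a, pdx L a (γ t, deriv γ t) * deriv γ t a from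
      Finset.sum_congr rfl fun a _ => mul_comm _ _]
    ring
  rw [hval] at h
  exact h
end Dyn

section ODE
variable {n : ℕ} {Ω : Set (Pt n)}

lemma exists_geodesic (hΩ : IsOpen Ω) {N : Pt n → Fin n → Fin n → ℝ}
    (hN : ∀ i k, ContDiffOn ℝ (⊤ : ℕ∞) (fun p => N p i k) Ω) {p : Pt n} (hp : p ∈ Ω) :
    ∃ (γ : ℝ → Fin n → ℝ) (I : Set ℝ), IsOpen I ∧ Convex ℝ I ∧ IsGeodesicOn Ω N γ I ∧
      (0 : ℝ) ∈ I ∧ γ 0 = p.1 ∧ deriv γ 0 = p.2 := by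
  classical
  set F : Pt n → Pt n := fun q => (q.2, fun k => - ∑ a, N q a k * q.2 a) with hF
  have hFs : ContDiffOn ℝ (⊤ : ℕ∞) F Ω := by
    refine ContDiffOn.prodMk contDiff_snd.contDiffOn ?_
    rw [contDiffOn_pi]
    intro k
    exact ContDiffOn.neg (ContDiffOn.sum fun a _ => (hN a k).mul (coord_smooth a).contDiffOn)
  have hFc : ContDiffAt ℝ 1 F p := (hFs.contDiffAt (hΩ.mem_nhds hp)).of_le (by decide)
  obtain ⟨f, hf0, ε, hε, hf⟩ := ContDiffAt.exists_forall_mem_closedBall_exists_eq_forall_mem_Ioo_hasDerivAt₀ hFc (0 : ℝ)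
  have h0mem : (0 : ℝ) ∈ Set.Ioo (0 - ε) (0 + ε) := by constructor <;> simp [hε]
  have hcont : ContinuousAt f 0 := (hf 0 h0mem).differentiableAt.continuousAt
  have hnh : {t : ℝ | f t ∈ Ω} ∈ nhds (0 : ℝ) :=
    hcont.preimage_mem_nhds (hΩ.mem_nhds (by rw [hf0]; exact hp))
  obtain ⟨δ, hδ, hball⟩ := Metric.mem_nhds_iff.1 hnh
  set r : ℝ := min δ ε with hr
  have hrpos : 0 < r := lt_min hδ hε
  set I : Set ℝ := Set.Ioo (-r) r with hI
  have hIopen : IsOpen I := isOpen_Ioo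
  have hIconv : Convex ℝ I := convex_Ioo _ _
  have h0I : (0 : ℝ) ∈ I := by
    constructor
    · simpa using hrpos
    · exact hrpos
  have hsub : ∀ t ∈ I, t ∈ Set.Ioo (0 - ε) (0 + ε) := by
    intro t ht
    obtain ⟨h1, h2⟩ := ht
    have hre : r ≤ ε := min_le_right δ ε
    constructor
    · simp only [zero_sub]; linarith
    · simp only [zero_add]; linarith
  have hfI : ∀ t ∈ I, HasDerivAt f (F (f t)) t := fun t ht => hf t (hsub t ht)
  have hfΩ : ∀ t ∈ I, f t ∈ Ω := by
    intro t ht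
    apply hball
    rw [Metric.mem_ball, Real.dist_eq, sub_zero, abs_lt]
    obtain ⟨h1, h2⟩ := ht
    constructor <;> linarith [min_le_left δ ε]
  set γ : ℝ → Fin n → ℝ := fun t => (f t).1 with hγ
  have hγ' : ∀ t ∈ I, HasDerivAt γ ((f t).2) t := by
    intro t ht
    have := (ContinuousLinearMap.fst ℝ (Fin n → ℝ)
      (Fin n → ℝ)).hasFDerivAt.comp_hasDerivAt t (hfI t ht)
    simpa [Function.comp_def, hF] using this
  have hderivγ : ∀ t ∈ I, deriv γ t = (f t).2 := fun t ht => (hγ' t ht).deriv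
  have hcurve : ∀ t ∈ I, ((γ t, deriv γ t) : Pt n) = f t := by
    intro t ht
    rw [hderivγ t ht]
  -- second order equation
  have hsnd : ∀ t ∈ I, ∀ k, HasDerivAt (fun s => (f s).2 k)
      (- ∑ a, N (f t) a k * (f t).2 a) t := by
    intro t ht k
    have := ((ContinuousLinearMap.proj (R := ℝ) (φ := fun _ : Fin n => ℝ) k).comp
      (ContinuousLinearMap.snd ℝ (Fin n → ℝ) (Fin n → ℝ))).hasFDerivAt.comp_hasDerivAt
        t (hfI t ht)
    simpa [Function.comp_def, hF] using this
  have hgeoeq : ∀ t ∈ I, ∀ k, deriv (fun s => deriv γ s k) t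
      + ∑ a, N (γ t, deriv γ t) a k * deriv γ t a = 0 := by
    intro t ht k
    have hev : (fun s => deriv γ s k) =ᶠ[nhds t] (fun s => (f s).2 k) := by
      filter_upwards [hIopen.mem_nhds ht] with s hs
      rw [hderivγ s hs]
    rw [hev.deriv_eq, (hsnd t ht k).deriv, hcurve t ht, hderivγ t ht]
    ring
  -- regularity
  have hfdiff : DifferentiableOn ℝ f I := fun t ht =>
    (hfI t ht).differentiableAt.differentiableWithinAt
  have hfcont : ContinuousOn f I := hfdiff.continuousOn
  have hderivf : ∀ t ∈ I, deriv f t = F (f t) := fun t ht => (hfI t ht).deriv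
  have hf1 : ContDiffOn ℝ 1 f I := by
    rw [show (1 : WithTop ℕ∞) = 0 + 1 from rfl, contDiffOn_succ_iff_deriv_of_isOpen hIopen]
    refine ⟨hfdiff, by intro h; exact absurd h (by decide), ?_⟩
    rw [contDiffOn_zero]
    exact ContinuousOn.congr ((hFs.continuousOn).comp hfcont hfΩ) hderivf
  have hf2 : ContDiffOn ℝ 2 f I := by
    rw [show (2 : WithTop ℕ∞) = 1 + 1 from rfl, contDiffOn_succ_iff_deriv_of_isOpen hIopen]
    refine ⟨hfdiff, by intro h; exact absurd h (by decide), ?_⟩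
    refine ContDiffOn.congr ?_ hderivf
    exact (hFs.of_le (by decide)).comp hf1 hfΩ
  have hγ2 : ContDiffOn ℝ 2 γ I := (contDiff_fst.comp_contDiffOn hf2)
  refine ⟨γ, I, hIopen, hIconv, ⟨hγ2, ?_, hgeoeq⟩, h0I, ?_, ?_⟩
  · intro t ht; rw [hcurve t ht]; exact hfΩ t ht
  · show (f 0).1 = p.1; rw [hf0]
  · rw [hderivγ 0 h0I, hf0]
end ODE

lemma const_of_derivzero {φ : ℝ → ℝ} {I : Set ℝ} (hIopen : IsOpen I) (hIconv : Convex ℝ I)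
    (h : ∀ t ∈ I, HasDerivAt φ 0 t) : ∀ s ∈ I, ∀ t ∈ I, φ s = φ t := by
  intro s hs t ht
  refine hIconv.is_const_of_fderivWithin_eq_zero
    (fun u hu => (h u hu).differentiableAt.differentiableWithinAt) ?_ hs ht
  intro u hu
  rw [fderivWithin_of_isOpen hIopen hu]
  have h0 : HasFDerivAt φ (0 : ℝ →L[ℝ] ℝ) u := by
    have := (h u hu).hasFDerivAt
    rwa [show (ContinuousLinearMap.toSpanSingleton ℝ (0:ℝ)) = 0 by
      ext x; simp] at this
  exact h0.fderiv


/-- **Coordinate form of Prop. 4.17** (constancy of `L` along geodesics). For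
`N_i^k := (N^L)_i^k + Z^k_{·i} + A_i y^k`, the function `t ↦ L(γ(t), γ̇(t))` is constant
along every `N`-geodesic `γ` iff `A_a y^a = −2 g_{ab} y^a Z^b / L` holds on `Ω`. -/
theorem L_constant_along_geodesics_iff
    {n : ℕ} (Ω : Set (Pt n)) (hΩopen : IsOpen Ω)
    (hΩconic : ∀ p ∈ Ω, ∀ t : ℝ, 0 < t → (p.1, t • p.2) ∈ Ω)
    (hΩnz : ∀ p ∈ Ω, p.2 ≠ 0)
    (L : Pt n → ℝ)
    (hLsmooth : ContDiffOn ℝ (⊤ : ℕ∞) L Ω)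
    (hLhom : ∀ p ∈ Ω, ∀ t : ℝ, 0 < t → L (p.1, t • p.2) = t ^ 2 * L p)
    (hLnz : ∀ p ∈ Ω, L p ≠ 0)
    (hginv : ∀ p ∈ Ω, IsUnit (gmet2 L p).det)
    (Z : Pt n → Fin n → ℝ)
    (hZsmooth : ContDiffOn ℝ (⊤ : ℕ∞) Z Ω)
    (hZhom : ∀ p ∈ Ω, ∀ t : ℝ, 0 < t → Z (p.1, t • p.2) = t ^ 2 • Z p)
    (A : Pt n → Fin n → ℝ)
    (hAsmooth : ContDiffOn ℝ (⊤ : ℕ∞) A Ω)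
    (hAhom : ∀ p ∈ Ω, ∀ t : ℝ, 0 < t → A (p.1, t • p.2) = A p) :
    (∀ (γ : ℝ → Fin n → ℝ) (I : Set ℝ), IsOpen I → Convex ℝ I →
        IsGeodesicOn Ω
          (fun p i k => metricConn L p i k + pdy (fun q => Z q k) i p + A p i * p.2 k)
          γ I →
        ∀ s ∈ I, ∀ t ∈ I, L (γ s, deriv γ s) = L (γ t, deriv γ t))
      ↔ (∀ p ∈ Ω, ∑ a, A p a * p.2 a
          = -2 * (∑ a, ∑ b, gmet2 L p a b * p.2 a * Z p b) / L p) := by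
  constructor
  · intro Hgeo p hp
    have hNs : ∀ i k, ContDiffOn ℝ (⊤ : ℕ∞)
        (fun p => metricConn L p i k + pdy (fun q => Z q k) i p + A p i * p.2 k) Ω := by
      intro i k
      refine ((conn_smooth hΩopen hLsmooth hginv i k).add
        (contDiffOn_pdy hΩopen (Zk_smooth hZsmooth k) i)).add ?_
      exact ((ContinuousLinearMap.proj (R := ℝ) (φ := fun _ : Fin n => ℝ)
        i).contDiff.comp_contDiffOn hAsmooth).mul (coord_smooth k).contDiffOn
    obtain ⟨γ, I, hIopen, hIconv, hgeo, h0I, hγ0, hγ'0⟩ :=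
      exists_geodesic hΩopen
        (N := fun p i k => metricConn L p i k + pdy (fun q => Z q k) i p + A p i * p.2 k)
        hNs hp
    have hder := deriv_L_along hΩopen hLsmooth hIopen hgeo h0I
    have hconst := Hgeo γ I hIopen hIconv hgeo
    have hev : (fun s => L (γ s, deriv γ s)) =ᶠ[nhds 0]
        fun _ => L (γ 0, deriv γ 0) := by
      filter_upwards [hIopen.mem_nhds h0I] with s hs
      exact hconst s hs 0 h0I
    have hzero : HasDerivAt (fun s => L (γ s, deriv γ s)) 0 0 :=
      (hasDerivAt_const 0 (L (γ 0, deriv γ 0))).congr_of_eventuallyEq hev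
    have hval := hder.unique hzero
    have hc0 : ((γ 0, deriv γ 0) : Pt n) = p := by
      rw [hγ0, hγ'0]
    rw [hc0, hγ'0] at hval
    have hkey := keyD hΩopen hΩconic hLsmooth hLhom hginv hZsmooth hZhom (A := A) p hp
    have eqn : -2 * (L p * (∑ a, A p a * p.2 a)
        + 2 * ∑ a, ∑ b, gmet2 L p a b * p.2 a * Z p b) = 0 := by
      rw [← hkey]; exact hval
    have hL0 := hLnz p hp
    have eqn2 : L p * (∑ a, A p a * p.2 a)
        + 2 * (∑ a, ∑ b, gmet2 L p a b * p.2 a * Z p b) = 0 := by linarith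
    rw [eq_div_iff hL0]
    linarith
  · intro hiff γ I hIopen hIconv hgeo
    refine const_of_derivzero hIopen hIconv ?_
    intro u hu
    have hder := deriv_L_along hΩopen hLsmooth hIopen hgeo hu
    have hmem := hgeo.2.1 u hu
    have hkey := keyD hΩopen hΩconic hLsmooth hLhom hginv hZsmooth hZhom (A := A)
      (γ u, deriv γ u) hmem
    have hcond := hiff _ hmem
    have hL0 := hLnz _ hmem
    have hval0 : -2 * (L (γ u, deriv γ u) * (∑ a, A (γ u, deriv γ u) a * (γ u, deriv γ u).2 a)
        + 2 * ∑ a, ∑ b, gmet2 L (γ u, deriv γ u) a b * (γ u, deriv γ u).2 a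
            * Z (γ u, deriv γ u) b) = 0 := by
      rw [hcond]
      field_simp
      ring
    have hc2 : ((γ u, deriv γ u) : Pt n).2 = deriv γ u := rfl
    rw [hc2] at hkey
    rwa [hkey.trans hval0] at hder
end
end

section
/- Coordinate form of Thm. 5.9 (lightlike geodesics are shared): Let L : Ω → ℝ be as in the context, with metric spray G^L. Let Z : Ω → ℝ^n be smooth, positively 2-homogeneous in y, and divisible by L, i.e. Z = L · Z̃ for some smooth Z̃ : Ω → ℝ^n. If γ is a C² curve with (γ(t), γ̇(t)) ∈ Ω solving the L-geodesic equation γ̈^i + 2 (G^L)^i(γ, γ̇) = 0 and whose initial velocity is lightlike, L(γ(0), γ̇(0)) = 0, then γ also solves γ̈^i + 2 [ (G^L)^i + Z^i ](γ, γ̇) = 0; that is, the L-geodesic starting at a lightlike vector coincides with the geodesic of the nonlinear connection N = N^L + ∂̇Z with the same initial condition. (For symmetric proper solutions of the paper's affine equation, Z is automatically divisible by L, so this is Thm. 5.9.) -/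
open scoped BigOperators

noncomputable section

variable {n : ℕ}

lemma llaux_vec_decomp (v w : Fin n → ℝ) :
    ((v, w) : Pt n) = (∑ a, v a • ((Pi.single a 1, 0) : Pt n))
      + ∑ i, w i • (((0 : Fin n → ℝ), Pi.single i 1) : Pt n) := by
  have hv : ∀ u : Fin n → ℝ, ∑ a, u a • (Pi.single a 1 : Fin n → ℝ) = u := by
    intro u
    have h : ∀ a, u a • (Pi.single a 1 : Fin n → ℝ) = Pi.single a (u a) := by
      intro a; ext b; by_cases h : b = a <;> simp [Pi.single_apply, h]
    simp only [h]
    exact Finset.univ_sum_single u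
  ext1 <;> simp [Prod.fst_sum, Prod.snd_sum, hv]

lemma llaux_fderiv_pt_apply {f : Pt n → ℝ} {p : Pt n} (hf : DifferentiableAt ℝ f p) (v w : Fin n → ℝ) :
    fderiv ℝ f p (v, w) = (∑ a, v a * pdx f a p) + ∑ i, w i * pdy f i p := by
  rw [llaux_vec_decomp v w, map_add, map_sum, map_sum]
  simp only [map_smul, smul_eq_mul]
  rfl

lemma llaux_euler {f : Pt n → ℝ} {p : Pt n} (hf : DifferentiableAt ℝ f p) (k : ℕ)
    (hhom : ∀ᶠ t in nhds (1:ℝ), f (p.1, t • p.2) = t ^ k * f p) :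
    ∑ j, p.2 j * pdy f j p = k * f p := by
  have hc : HasDerivAt (fun t : ℝ => ((p.1, t • p.2) : Pt n)) (((0 : Fin n → ℝ), p.2) : Pt n) 1 := by
    have h2 : HasDerivAt (fun t : ℝ => t • p.2) ((1:ℝ) • p.2) 1 :=
      (hasDerivAt_id 1).smul_const p.2
    simpa using (hasDerivAt_const (1:ℝ) p.1).prodMk h2
  have hφ : HasDerivAt (fun t : ℝ => f (p.1, t • p.2)) (fderiv ℝ f p ((0 : Fin n → ℝ), p.2)) 1 := by
    have hfp : HasFDerivAt f (fderiv ℝ f p) ((p.1, (1:ℝ) • p.2) : Pt n) := by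
      simpa using hf.hasFDerivAt
    exact hfp.comp_hasDerivAt 1 hc
  have hψ : HasDerivAt (fun t : ℝ => t ^ k * f p) ((k : ℝ) * f p) 1 := by
    simpa using (hasDerivAt_pow k (1:ℝ)).mul_const (f p)
  have h2 : HasDerivAt (fun t : ℝ => t ^ k * f p) (fderiv ℝ f p ((0 : Fin n → ℝ), p.2)) 1 :=
    hφ.congr_of_eventuallyEq (hhom.mono fun t ht => ht.symm)
  have := hψ.unique h2
  rw [llaux_fderiv_pt_apply hf 0 p.2] at this
  simpa using this.symm

lemma llaux_contDiffAt_pdy {f : Pt n → ℝ} {p : Pt n} (hf : ContDiffAt ℝ (⊤ : ℕ∞) f p) (i : Fin n) :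
    ContDiffAt ℝ (⊤ : ℕ∞) (pdy f i) p := by
  have h1 : ContDiffAt ℝ (⊤ : ℕ∞) (fderiv ℝ f) p := hf.fderiv_right (by simp)
  exact h1.clm_apply contDiffAt_const

lemma llaux_contDiffAt_pdx {f : Pt n → ℝ} {p : Pt n} (hf : ContDiffAt ℝ (⊤ : ℕ∞) f p) (i : Fin n) :
    ContDiffAt ℝ (⊤ : ℕ∞) (pdx f i) p := by
  have h1 : ContDiffAt ℝ (⊤ : ℕ∞) (fderiv ℝ f) p := hf.fderiv_right (by simp)
  exact h1.clm_apply contDiffAt_const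

-- second derivative symmetry
lemma llaux_pdy_pdy_comm {f : Pt n → ℝ} {p : Pt n} (hf : ContDiffAt ℝ (⊤ : ℕ∞) f p) (i j : Fin n) :
    pdy (pdy f i) j p = pdy (pdy f j) i p := by
  have hd : DifferentiableAt ℝ (fderiv ℝ f) p :=
    (hf.fderiv_right (m := 1) (by
      rw [show (1 + 1 : WithTop ℕ∞) = ((1+1:ℕ∞) : WithTop ℕ∞) from rfl, WithTop.coe_le_coe]
      exact le_top)).differentiableAt one_ne_zero
  have key : ∀ v w : Pt n, fderiv ℝ (fun q => fderiv ℝ f q v) p w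
      = fderiv ℝ (fderiv ℝ f) p w v := by
    intro v w
    have h := ((ContinuousLinearMap.apply ℝ ℝ v).hasFDerivAt.comp p hd.hasFDerivAt)
    have := h.fderiv
    calc fderiv ℝ (fun q => fderiv ℝ f q v) p w
        = fderiv ℝ ((ContinuousLinearMap.apply ℝ ℝ v) ∘ (fderiv ℝ f)) p w := rfl
      _ = ((ContinuousLinearMap.apply ℝ ℝ v).comp (fderiv ℝ (fderiv ℝ f) p)) w := by rw [this]
      _ = fderiv ℝ (fderiv ℝ f) p w v := rfl
  have hsym := hf.isSymmSndFDerivAt (by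
    rw [minSmoothness_of_isRCLikeNormedField, show (2 : WithTop ℕ∞) = ((2:ℕ∞) : WithTop ℕ∞) from rfl, WithTop.coe_le_coe]
    exact le_top)
  have e1 : pdy (pdy f i) j p
      = fderiv ℝ (fderiv ℝ f) p (0, Pi.single j 1) (0, Pi.single i 1) := key _ _
  have e2 : pdy (pdy f j) i p
      = fderiv ℝ (fderiv ℝ f) p (0, Pi.single i 1) (0, Pi.single j 1) := key _ _
  rw [e1, e2]
  exact hsym _ _

lemma llaux_pdy_hom {Ω : Set (Pt n)} (hΩopen : IsOpen Ω)
    (hΩconic : ∀ p ∈ Ω, ∀ t : ℝ, 0 < t → (p.1, t • p.2) ∈ Ω)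
    {f : Pt n → ℝ} (hf : ContDiffOn ℝ (⊤ : ℕ∞) f Ω) (k : ℕ)
    (hhom : ∀ p ∈ Ω, ∀ t : ℝ, 0 < t → f (p.1, t • p.2) = t ^ k * f p)
    {p : Pt n} (hp : p ∈ Ω) {t : ℝ} (ht : 0 < t) (i : Fin n) :
    t * pdy f i (p.1, t • p.2) = t ^ k * pdy f i p := by
  set q : Pt n := (p.1, t • p.2) with hqdef
  have hq : q ∈ Ω := hΩconic p hp t ht
  set M : Pt n →L[ℝ] Pt n :=
    (ContinuousLinearMap.fst ℝ (Fin n → ℝ) (Fin n → ℝ)).prod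
      (t • ContinuousLinearMap.snd ℝ (Fin n → ℝ) (Fin n → ℝ)) with hMdef
  have hone : (1 : WithTop ℕ∞) ≤ ((⊤ : ℕ∞) : WithTop ℕ∞) := by
    rw [show (1 : WithTop ℕ∞) = ((1:ℕ∞) : WithTop ℕ∞) from rfl, WithTop.coe_le_coe]; exact le_top
  have hdq : DifferentiableAt ℝ f q :=
    (hf.contDiffAt (hΩopen.mem_nhds hq)).differentiableAt (by simp)
  have hdp : DifferentiableAt ℝ f p :=
    (hf.contDiffAt (hΩopen.mem_nhds hp)).differentiableAt (by simp)
  have hMp : M p = q := by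
    ext1 <;> simp [hMdef, hqdef]
  have h1 : HasFDerivAt (f ∘ M) ((fderiv ℝ f q).comp M) p := by
    refine HasFDerivAt.comp p ?_ M.hasFDerivAt
    rw [hMp]; exact hdq.hasFDerivAt
  have heq : (f ∘ M) =ᶠ[nhds p] fun r => t ^ k * f r := by
    filter_upwards [hΩopen.mem_nhds hp] with r hr
    have : M r = (r.1, t • r.2) := by ext1 <;> simp [hMdef]
    simp only [Function.comp, this]
    exact hhom r hr t ht
  have h2 : HasFDerivAt (fun r => t ^ k * f r) (t ^ k • fderiv ℝ f p) p :=
    hdp.hasFDerivAt.const_mul (t ^ k)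
  have h3 : HasFDerivAt (fun r => t ^ k * f r) ((fderiv ℝ f q).comp M) p :=
    h1.congr_of_eventuallyEq heq.symm
  have huniq := h3.unique h2
  have happ := congrArg (fun (T : Pt n →L[ℝ] ℝ) => T (0, Pi.single i 1)) huniq
  simp only [ContinuousLinearMap.coe_comp', Function.comp, ContinuousLinearMap.coe_smul',
    Pi.smul_apply, smul_eq_mul] at happ
  have hM1 : M ((0 : Fin n → ℝ), Pi.single i 1)
      = t • (((0 : Fin n → ℝ), Pi.single i 1) : Pt n) := by
    ext1 <;> simp [hMdef]
  rw [hM1, map_smul] at happ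
  simpa [pdy, smul_eq_mul] using happ


section Key

variable {Ω : Set (Pt n)} (hΩopen : IsOpen Ω)
  (hΩconic : ∀ p ∈ Ω, ∀ t : ℝ, 0 < t → (p.1, t • p.2) ∈ Ω)
  {L : Pt n → ℝ} (hLsmooth : ContDiffOn ℝ (⊤ : ℕ∞) L Ω)
  (hLhom : ∀ p ∈ Ω, ∀ t : ℝ, 0 < t → L (p.1, t • p.2) = t ^ 2 * L p)

lemma llaux_hone' : (1 : WithTop ℕ∞) ≤ ((⊤ : ℕ∞) : WithTop ℕ∞) := by
  rw [show (1 : WithTop ℕ∞) = ((1:ℕ∞) : WithTop ℕ∞) from rfl, WithTop.coe_le_coe]; exact le_top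

include hΩopen hLsmooth in
lemma llaux_hCp {q : Pt n} (hq : q ∈ Ω) : ContDiffAt ℝ (⊤ : ℕ∞) L q :=
  hLsmooth.contDiffAt (hΩopen.mem_nhds hq)

include hΩopen hΩconic hLsmooth hLhom in
lemma llaux_F1 {q : Pt n} (hq : q ∈ Ω) (i : Fin n) :
    ∑ j, gmet2 L q i j * q.2 j = (1 / 2) * pdy L i q := by
  have hdi : DifferentiableAt ℝ (pdy L i) q :=
    (llaux_contDiffAt_pdy (llaux_hCp hΩopen hLsmooth hq) i).differentiableAt (by simp)
  have hhom : ∀ᶠ t in nhds (1:ℝ), pdy L i (q.1, t • q.2) = t ^ 1 * pdy L i q := by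
    filter_upwards [eventually_gt_nhds (by norm_num : (0:ℝ) < 1)] with t ht
    have h := llaux_pdy_hom hΩopen hΩconic hLsmooth 2 hLhom hq ht i
    have hne : t ≠ 0 := ne_of_gt ht
    field_simp at h ⊢
    nlinarith [h]
  have he := llaux_euler hdi 1 hhom
  have : ∀ j, gmet2 L q i j * q.2 j = (1/2) * (q.2 j * pdy (pdy L i) j q) := by
    intro j; simp [gmet2]; ring
  rw [Finset.sum_congr rfl fun j _ => this j, ← Finset.mul_sum, he]
  push_cast; ring

include hΩopen hLsmooth hLhom in
lemma llaux_F0 {q : Pt n} (hq : q ∈ Ω) :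
    ∑ j, q.2 j * pdy L j q = 2 * L q := by
  have hd : DifferentiableAt ℝ L q := (llaux_hCp hΩopen hLsmooth hq).differentiableAt (by simp)
  have hhom : ∀ᶠ t in nhds (1:ℝ), L (q.1, t • q.2) = t ^ 2 * L q := by
    filter_upwards [eventually_gt_nhds (by norm_num : (0:ℝ) < 1)] with t ht
    exact hLhom q hq t ht
  have := llaux_euler hd 2 hhom
  push_cast at this; linarith [this]

include hΩopen hΩconic hLsmooth hLhom in
lemma llaux_F4 {q : Pt n} (hq : q ∈ Ω) :
    ∑ b, ∑ c, gmet2 L q b c * q.2 b * q.2 c = L q := by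
  have h1 : ∀ b, ∑ c, gmet2 L q b c * q.2 b * q.2 c
      = q.2 b * ∑ c, gmet2 L q b c * q.2 c := by
    intro b; rw [Finset.mul_sum]; exact Finset.sum_congr rfl fun c _ => by ring
  calc ∑ b, ∑ c, gmet2 L q b c * q.2 b * q.2 c
      = ∑ b, q.2 b * ((1/2) * pdy L b q) := by
        refine Finset.sum_congr rfl fun b _ => ?_
        rw [h1 b, llaux_F1 hΩopen hΩconic hLsmooth hLhom hq b]
    _ = (1/2) * ∑ b, q.2 b * pdy L b q := by rw [Finset.mul_sum]; exact Finset.sum_congr rfl fun b _ => by ring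
    _ = L q := by rw [llaux_F0 hΩopen hLsmooth hLhom hq]; ring

include hΩopen hLsmooth in
lemma llaux_F2 {q : Pt n} (hq : q ∈ Ω) (i j : Fin n) :
    gmet2 L q i j = gmet2 L q j i := by
  simp only [gmet2, Matrix.of_apply]
  rw [llaux_pdy_pdy_comm (llaux_hCp hΩopen hLsmooth hq) i j]

lemma llaux_F3 {q : Pt n} (hg : IsUnit (gmet2 L q).det) (j a : Fin n) :
    ∑ i, gmet2 L q j i * ginv2 L q i a = if j = a then 1 else 0 := by
  have h := Matrix.mul_nonsing_inv (gmet2 L q) hg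
  have := congrFun (congrFun h j) a
  rw [Matrix.mul_apply] at this
  rw [ginv2]
  rw [this, Matrix.one_apply]

include hΩopen hLsmooth in
lemma llaux_gmet2_contDiffAt {q : Pt n} (hq : q ∈ Ω) (b c : Fin n) :
    ContDiffAt ℝ (⊤ : ℕ∞) (fun r => gmet2 L r b c) q := by
  have h1 : ContDiffAt ℝ (⊤ : ℕ∞) (pdy (pdy L b) c) q :=
    llaux_contDiffAt_pdy (llaux_contDiffAt_pdy (llaux_hCp hΩopen hLsmooth hq) b) c
  simpa [gmet2] using h1.const_smul (1/2 : ℝ)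

lemma llaux_pdx_snd_apply (c a : Fin n) (p : Pt n) :
    pdx (fun q : Pt n => q.2 c) a p = 0 := by
  have hfun : (fun q : Pt n => q.2 c)
      = ⇑((ContinuousLinearMap.proj c).comp
          (ContinuousLinearMap.snd ℝ (Fin n → ℝ) (Fin n → ℝ))) := rfl
  rw [pdx, hfun, ContinuousLinearMap.fderiv]
  simp

lemma llaux_pdx_mul {u v : Pt n → ℝ} {p : Pt n} (hu : DifferentiableAt ℝ u p)
    (hv : DifferentiableAt ℝ v p) (a : Fin n) :
    pdx (fun q => u q * v q) a p = u p * pdx v a p + v p * pdx u a p := by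
  simp only [pdx]
  rw [fderiv_fun_mul hu hv]
  simp [smul_eq_mul]

include hΩopen hΩconic hLsmooth hLhom in
lemma F5 {p : Pt n} (hp : p ∈ Ω) (a : Fin n) :
    pdx L a p = ∑ b, ∑ c, pdx (fun q => gmet2 L q b c) a p * p.2 b * p.2 c := by
  classical
  set Q : Pt n → ℝ := fun q => ∑ b, ∑ c, gmet2 L q b c * q.2 b * q.2 c with hQdef
  have heq : Q =ᶠ[nhds p] L := by
    filter_upwards [hΩopen.mem_nhds hp] with q hq
    exact llaux_F4 hΩopen hΩconic hLsmooth hLhom hq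
  have hfd : fderiv ℝ Q p = fderiv ℝ L p := heq.fderiv_eq
  have hyc : ∀ c : Fin n, DifferentiableAt ℝ (fun q : Pt n => q.2 c) p := by
    intro c
    exact (((ContinuousLinearMap.proj c).comp
      (ContinuousLinearMap.snd ℝ (Fin n → ℝ) (Fin n → ℝ))).differentiableAt)
  have hgbc : ∀ b c : Fin n, DifferentiableAt ℝ (fun q => gmet2 L q b c) p := fun b c =>
    (llaux_gmet2_contDiffAt hΩopen hLsmooth hp b c).differentiableAt (by simp)
  have hterm : ∀ b c : Fin n, DifferentiableAt ℝ (fun q => gmet2 L q b c * q.2 b * q.2 c) p :=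
    fun b c => ((hgbc b c).mul (hyc b)).mul (hyc c)
  have hinner : ∀ b : Fin n, DifferentiableAt ℝ (fun q => ∑ c, gmet2 L q b c * q.2 b * q.2 c) p :=
    fun b => DifferentiableAt.fun_sum fun c _ => hterm b c
  have h1 : pdx Q a p = ∑ b, pdx (fun q => ∑ c, gmet2 L q b c * q.2 b * q.2 c) a p := by
    simp only [pdx, hQdef]
    rw [fderiv_fun_sum fun b _ => hinner b]
    simp
  have h2 : ∀ b, pdx (fun q => ∑ c, gmet2 L q b c * q.2 b * q.2 c) a p
      = ∑ c, pdx (fun q => gmet2 L q b c * q.2 b * q.2 c) a p := by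
    intro b
    simp only [pdx]
    rw [fderiv_fun_sum fun c _ => hterm b c]
    simp
  have h3 : ∀ b c, pdx (fun q => gmet2 L q b c * q.2 b * q.2 c) a p
      = pdx (fun q => gmet2 L q b c) a p * p.2 b * p.2 c := by
    intro b c
    rw [llaux_pdx_mul ((hgbc b c).fun_mul (hyc b)) (hyc c) a,
        llaux_pdx_mul (hgbc b c) (hyc b) a, llaux_pdx_snd_apply, llaux_pdx_snd_apply]
    ring
  have hQL : pdx Q a p = pdx L a p := by simp only [pdx, hfd]
  rw [← hQL, h1]
  exact Finset.sum_congr rfl fun b _ => by rw [h2 b]; exact Finset.sum_congr rfl fun c _ => h3 b c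

include hΩopen hΩconic hLsmooth hLhom in
lemma llaux_key_id {p : Pt n} (hp : p ∈ Ω) (hg : IsUnit (gmet2 L p).det) :
    ∑ i, (2 * spray L p i) * pdy L i p = ∑ a, p.2 a * pdx L a p := by
  classical
  set T : Fin n → ℝ := fun a => ∑ b, ∑ c,
    (2 * pdx (fun q => gmet2 L q a b) c p - pdx (fun q => gmet2 L q b c) a p)
      * p.2 b * p.2 c with hTdef
  have hpdy : ∀ i, pdy L i p = 2 * ∑ j, gmet2 L p i j * p.2 j := by
    intro i
    have := llaux_F1 hΩopen hΩconic hLsmooth hLhom hp i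
    linarith
  have step1 : ∀ i, (2 * spray L p i) * pdy L i p
      = ∑ a, ∑ j, (ginv2 L p i a * T a) * (gmet2 L p i j * p.2 j) := by
    intro i
    rw [hpdy i, spray, ← Finset.sum_mul_sum]
    ring
  have step2 : ∑ i, (2 * spray L p i) * pdy L i p = ∑ j, T j * p.2 j := by
    rw [Finset.sum_congr rfl fun i _ => step1 i]
    have inner : ∀ a j : Fin n, ∑ i, (ginv2 L p i a * T a) * (gmet2 L p i j * p.2 j)
        = (T a * p.2 j) * (if j = a then 1 else 0) := by
      intro a j
      rw [← llaux_F3 hg j a, Finset.mul_sum]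
      refine Finset.sum_congr rfl fun i _ => ?_
      rw [llaux_F2 hΩopen hLsmooth hp i j]
      ring
    calc ∑ i, ∑ a, ∑ j, (ginv2 L p i a * T a) * (gmet2 L p i j * p.2 j)
        = ∑ a, ∑ j, ∑ i, (ginv2 L p i a * T a) * (gmet2 L p i j * p.2 j) := by
          rw [Finset.sum_comm]
          exact Finset.sum_congr rfl fun a _ => Finset.sum_comm
      _ = ∑ a, ∑ j, (T a * p.2 j) * (if j = a then 1 else 0) := by
          exact Finset.sum_congr rfl fun a _ => Finset.sum_congr rfl fun j _ => inner a j
      _ = ∑ j, ∑ a, (T a * p.2 j) * (if j = a then 1 else 0) := Finset.sum_comm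
      _ = ∑ j, T j * p.2 j := by
          refine Finset.sum_congr rfl fun j _ => ?_
          simp [mul_ite, Finset.sum_ite_eq]
  -- step 3 : rewrite ∑ j, T j * p.2 j
  set P : Fin n → Fin n → Fin n → ℝ := fun b c a => pdx (fun q => gmet2 L q b c) a p with hPdef
  have cyc : ∀ f : Fin n → Fin n → Fin n → ℝ,
      ∑ j, ∑ b, ∑ c, f j b c = ∑ j, ∑ b, ∑ c, f b c j := by
    intro f
    calc ∑ j, ∑ b, ∑ c, f j b c
        = ∑ b, ∑ c, ∑ j, f b c j := rfl
      _ = ∑ b, ∑ j, ∑ c, f b c j := Finset.sum_congr rfl fun b _ => Finset.sum_comm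
      _ = ∑ j, ∑ b, ∑ c, f b c j := Finset.sum_comm
  have expand : ∑ j, T j * p.2 j
      = ∑ j, ∑ b, ∑ c, ((2 * P j b c) * p.2 b * p.2 c * p.2 j
          - P b c j * p.2 b * p.2 c * p.2 j) := by
    refine Finset.sum_congr rfl fun j _ => ?_
    rw [hTdef]
    simp only []
    rw [Finset.sum_mul]
    refine Finset.sum_congr rfl fun b _ => ?_
    rw [Finset.sum_mul]
    refine Finset.sum_congr rfl fun c _ => ?_
    ring
  have hsub : ∑ j, ∑ b, ∑ c, ((2 * P j b c) * p.2 b * p.2 c * p.2 j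
          - P b c j * p.2 b * p.2 c * p.2 j)
      = 2 * (∑ j, ∑ b, ∑ c, P j b c * p.2 b * p.2 c * p.2 j)
        - ∑ j, ∑ b, ∑ c, P b c j * p.2 b * p.2 c * p.2 j := by
    rw [Finset.mul_sum, ← Finset.sum_sub_distrib]
    refine Finset.sum_congr rfl fun j _ => ?_
    rw [Finset.mul_sum, ← Finset.sum_sub_distrib]
    refine Finset.sum_congr rfl fun b _ => ?_
    rw [Finset.mul_sum, ← Finset.sum_sub_distrib]
    refine Finset.sum_congr rfl fun c _ => ?_
    ring
  have hcyc2 : ∑ j, ∑ b, ∑ c, P j b c * p.2 b * p.2 c * p.2 j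
      = ∑ j, ∑ b, ∑ c, P b c j * p.2 b * p.2 c * p.2 j := by
    rw [cyc (fun j b c => P j b c * p.2 b * p.2 c * p.2 j)]
    refine Finset.sum_congr rfl fun j _ => Finset.sum_congr rfl fun b _ =>
      Finset.sum_congr rfl fun c _ => by ring
  have hfinal : ∑ j, ∑ b, ∑ c, P b c j * p.2 b * p.2 c * p.2 j
      = ∑ a, p.2 a * pdx L a p := by
    refine Finset.sum_congr rfl fun j _ => ?_
    rw [F5 hΩopen hΩconic hLsmooth hLhom hp j, Finset.mul_sum]
    refine Finset.sum_congr rfl fun b _ => ?_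
    rw [Finset.mul_sum]
    refine Finset.sum_congr rfl fun c _ => ?_
    ring
  rw [step2, expand, hsub, hcyc2, hfinal]
  ring

end Key


/-- **Coordinate form of Thm. 5.9** (lightlike geodesics are shared). If `Z` is smooth,
2-homogeneous in `y` and divisible by `L` (`Z = L Z̃` with `Z̃` smooth), then every
`L`-geodesic with lightlike initial velocity also solves the geodesic equation of the
spray `G^L + Z`, i.e. of the nonlinear connection `N = N^L + ∂̇Z`. -/
theorem lightlike_geodesics_shared
    {n : ℕ} (Ω : Set (Pt n)) (hΩopen : IsOpen Ω)
    (hΩconic : ∀ p ∈ Ω, ∀ t : ℝ, 0 < t → (p.1, t • p.2) ∈ Ω)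
    (hΩnz : ∀ p ∈ Ω, p.2 ≠ 0)
    (L : Pt n → ℝ)
    (hLsmooth : ContDiffOn ℝ (⊤ : ℕ∞) L Ω)
    (hLhom : ∀ p ∈ Ω, ∀ t : ℝ, 0 < t → L (p.1, t • p.2) = t ^ 2 * L p)
    (hginv : ∀ p ∈ Ω, IsUnit (gmet2 L p).det)
    (Z : Pt n → Fin n → ℝ)
    (hZsmooth : ContDiffOn ℝ (⊤ : ℕ∞) Z Ω)
    (hZhom : ∀ p ∈ Ω, ∀ t : ℝ, 0 < t → Z (p.1, t • p.2) = t ^ 2 • Z p)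
    (Zt : Pt n → Fin n → ℝ)
    (hZtsmooth : ContDiffOn ℝ (⊤ : ℕ∞) Zt Ω)
    (hdiv : ∀ p ∈ Ω, Z p = L p • Zt p)
    (γ : ℝ → Fin n → ℝ) (I : Set ℝ) (hIopen : IsOpen I) (hIconv : Convex ℝ I)
    (hI0 : (0 : ℝ) ∈ I)
    (hγC2 : ContDiffOn ℝ 2 γ I)
    (hγΩ : ∀ t ∈ I, (γ t, deriv γ t) ∈ Ω)
    (hγgeo : ∀ t ∈ I, ∀ i,
      deriv (fun s => deriv γ s i) t + 2 * spray L (γ t, deriv γ t) i = 0)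
    (hlight : L (γ 0, deriv γ 0) = 0) :
    ∀ t ∈ I, ∀ i,
      deriv (fun s => deriv γ s i) t
        + 2 * (spray L (γ t, deriv γ t) i + Z (γ t, deriv γ t) i) = 0 := by
  classical
  set c : ℝ → Pt n := fun t => (γ t, deriv γ t) with hcdef
  set E : ℝ → ℝ := fun t => L (c t) with hEdef
  -- E has derivative zero on I
  have hE0 : ∀ t ∈ I, HasDerivAt E 0 t := by
    intro t ht
    have hct : ContDiffAt ℝ 2 γ t := hγC2.contDiffAt (hIopen.mem_nhds ht)
    have hd1 : ContDiffAt ℝ 1 (deriv γ) t := by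
      have h1 : ContDiffAt ℝ 1 (fderiv ℝ γ) t := hct.fderiv_right (by norm_num)
      have h2 : ContDiffAt ℝ 1 (fun s => fderiv ℝ γ s 1) t := h1.clm_apply contDiffAt_const
      exact h2.congr_of_eventuallyEq (Filter.Eventually.of_forall fun s => rfl)
    have hdd : DifferentiableAt ℝ (deriv γ) t := hd1.differentiableAt one_ne_zero
    have hdγ : DifferentiableAt ℝ γ t := hct.differentiableAt (by norm_num)
    have hcd : HasDerivAt c (deriv γ t, deriv (deriv γ) t) t :=
      (hdγ.hasDerivAt).prodMk (hdd.hasDerivAt)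
    have hLd : DifferentiableAt ℝ L (c t) :=
      (llaux_hCp hΩopen hLsmooth (hγΩ t ht)).differentiableAt (by simp)
    have hE : HasDerivAt E (fderiv ℝ L (c t) (deriv γ t, deriv (deriv γ) t)) t :=
      hLd.hasFDerivAt.comp_hasDerivAt t hcd
    have hcomp : ∀ i, deriv (deriv γ) t i = deriv (fun s => deriv γ s i) t := by
      intro i
      have h := (ContinuousLinearMap.proj (R := ℝ) (φ := fun _ : Fin n => ℝ)
        i).hasFDerivAt.comp_hasDerivAt t hdd.hasDerivAt
      exact (h.deriv).symm
    have hval : fderiv ℝ L (c t) (deriv γ t, deriv (deriv γ) t) = 0 := by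
      rw [llaux_fderiv_pt_apply hLd]
      have hsnd : ∀ i, deriv (deriv γ) t i = -(2 * spray L (c t) i) := by
        intro i
        rw [hcomp i]
        have := hγgeo t ht i
        rw [hcdef]
        linarith
      have hk := llaux_key_id hΩopen hΩconic hLsmooth hLhom (hγΩ t ht) (hginv _ (hγΩ t ht))
      have h2 : (c t).2 = deriv γ t := rfl
      calc (∑ a, (deriv γ t) a * pdx L a (c t))
            + ∑ i, deriv (deriv γ) t i * pdy L i (c t)
          = (∑ a, (c t).2 a * pdx L a (c t))
            - ∑ i, (2 * spray L (c t) i) * pdy L i (c t) := by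
              have e2 : ∑ i, deriv (deriv γ) t i * pdy L i (c t)
                  = ∑ i, -((2 * spray L (c t) i) * pdy L i (c t)) :=
                Finset.sum_congr rfl fun i _ => by rw [hsnd i]; ring
              rw [e2, Finset.sum_neg_distrib]
              ring
        _ = 0 := by rw [← hk]; ring
    rw [hval] at hE
    exact hE
  -- E is constant on I
  have hEconst : ∀ t ∈ I, E t = E 0 := by
    intro t ht
    have hdiffOn : DifferentiableOn ℝ E I := fun s hs =>
      ((hE0 s hs).differentiableAt).differentiableWithinAt
    have hfd : ∀ s ∈ I, fderivWithin ℝ E I s = 0 := by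
      intro s hs
      rw [fderivWithin_of_isOpen hIopen hs]
      have h := (hE0 s hs).hasFDerivAt.fderiv
      rw [h]
      ext x
      simp
    exact hIconv.is_const_of_fderivWithin_eq_zero hdiffOn hfd ht hI0
  have hLzero : ∀ t ∈ I, L (γ t, deriv γ t) = 0 := fun t ht => by
    have := hEconst t ht
    simpa [hEdef, hcdef, hlight] using this
  intro t ht i
  have hz : Z (γ t, deriv γ t) i = 0 := by
    rw [hdiv _ (hγΩ t ht), Pi.smul_apply, hLzero t ht]
    simp
  have := hγgeo t ht i
  rw [hz]
  linarith
end
end
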